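/- arXiv:1512.02328 — 3 statements merged into one kernel-verified Lean document; each statement's English description precedes it below -/
import Mathlib

section
/- Let G be a loopless multigraph on n ≥ 2 vertices with maximum degree Δ ≥ 2. Then there exist a matching M₁ of G, a matching M₂ of G − M₁, and a matching M₃ of (G − M₁) − M₂ such that the multigraph ((G − M₁) − M₂) − M₃ has maximum degree at most Δ − 2. -/
open scoped Classical

namespace NSBPaper

variable {V : Type} [Fintype V] [DecidableEq V]

/-- Degree of a vertex in a loopless multigraph given by multiplicity function `w`. -/
def deg (w : V → V → ℕ) (v : V) : ℕ := ∑ u, w v u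

/-- Maximum degree of the multigraph. -/
def maxDeg (w : V → V → ℕ) : ℕ := Finset.univ.sup fun v => deg w v

/-- The support simple graph of a multigraph: `u` and `v` are adjacent iff `u ≠ v`
and there is at least one multi-edge between them. -/
def support (w : V → V → ℕ) : SimpleGraph V where
  Adj u v := u ≠ v ∧ 1 ≤ w u v ∧ 1 ≤ w v u
  symm := ⟨fun u v h => ⟨h.1.symm, h.2.2, h.2.1⟩⟩
  loopless := ⟨fun v h => h.1 rfl⟩

/-- A set of unordered pairs `M` saturates a vertex `v` if some pair of `M` contains `v`. -/
def Saturates (M : Finset (Sym2 V)) (v : V) : Prop := ∃ e ∈ M, v ∈ e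

/-- `M` is a matching of the multigraph `w`: its elements are non-loop edges of the
support, and no two distinct elements share a vertex. -/
def IsMatching (w : V → V → ℕ) (M : Finset (Sym2 V)) : Prop :=
  (∀ e ∈ M, ¬ e.IsDiag) ∧
  (∀ u v : V, s(u, v) ∈ M → 1 ≤ w u v) ∧
  (∀ e ∈ M, ∀ f ∈ M, e ≠ f → ∀ x : V, x ∈ e → x ∉ f)

/-- `M` is a maximal matching of `w`: no pair can be added keeping it a matching. -/
def IsMaximalMatching (w : V → V → ℕ) (M : Finset (Sym2 V)) : Prop :=
  IsMatching w M ∧ ∀ e : Sym2 V, e ∉ M → ¬ IsMatching w (insert e M)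

/-- Removing a matching `M` from the multigraph `w`: the multiplicity of each pair in `M`
decreases by one. -/
def removeMatching (w : V → V → ℕ) (M : Finset (Sym2 V)) : V → V → ℕ :=
  fun u v => if s(u, v) ∈ M then w u v - 1 else w u v

/-- The subgraph of `G` induced by `Z` is bipartite: there is a set `A` such that every
edge of `G` inside `Z` joins `A` to its complement. -/
def BipartiteOn (G : SimpleGraph V) (Z : Set V) : Prop :=
  ∃ A : Set V, ∀ ⦃u v : V⦄, u ∈ Z → v ∈ Z → G.Adj u v → (u ∈ A ↔ v ∉ A)

/-- The edge multiset of `w` can be partitioned into `T` matchings. -/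
def CanEvacuate (w : V → V → ℕ) (T : ℕ) : Prop :=
  ∃ M : Fin T → Finset (Sym2 V),
    (∀ j, IsMatching w (M j)) ∧
    ∀ u v : V, (Finset.univ.filter fun j => s(u, v) ∈ M j).card = w u v

/-- The vertex-weight of a matching: the sum of the weights of its saturated vertices. -/
noncomputable def matchWeight (φ : V → ℕ) (M : Finset (Sym2 V)) : ℕ :=
  ∑ v : V, if Saturates M v then φ v else 0

/-- `Rfun M k i = 1` iff vertex `i` is saturated by the matching chosen in slot `k`. -/
noncomputable def Rfun (M : ℕ → Finset (Sym2 V)) (k : ℕ) (i : V) : ℕ :=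
  if Saturates (M k) i then 1 else 0

/-- `Ufun M k i` is `R i (k-1) * R i (k-2)` if `k ≡ 2 [MOD 3]` and `R i (k-1)` otherwise,
with `R i k = 0` for `k < 0`. -/
noncomputable def Ufun (M : ℕ → Finset (Sym2 V)) (k : ℕ) (i : V) : ℕ :=
  if k = 0 then 0
  else if k % 3 = 2 then Rfun M (k - 1) i * Rfun M (k - 2) i
  else Rfun M (k - 1) i

/-- Vertex `i` is heavy in `w`: `n * d(i) ≥ (n - 1) * Δ`. -/
def Heavy (w : V → V → ℕ) (i : V) : Prop :=
  (Fintype.card V - 1) * maxDeg w ≤ Fintype.card V * deg w i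

/-- Vertex `i` is critical in `w`: its degree is the maximum degree. -/
def Critical (w : V → V → ℕ) (i : V) : Prop := deg w i = maxDeg w

/-- The NSB weight of vertex `i`, where `u i` records whether `i` received enough
service previously. -/
noncomputable def nsbWeight (w : V → V → ℕ) (u : V → ℕ) (i : V) : ℕ :=
  if Heavy w i then deg w i * (2 - u i) else deg w i

/-- The LC-NSB weight of vertex `i`. -/
noncomputable def lcnsbWeight (w : V → V → ℕ) (u : V → ℕ) (i : V) : ℕ :=
  if Critical w i then 5 - 2 * u i
  else if Heavy w i then 4 - 2 * u i
  else 1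

/-- An NSB evacuation run on the initial multigraph `w0`: in each slot `k`, a matching
`M k` of `G k` maximizing the total NSB weight of saturated vertices is removed. -/
structure NSBRun (w0 : V → V → ℕ) where
  G : ℕ → V → V → ℕ
  M : ℕ → Finset (Sym2 V)
  init : G 0 = w0
  step : ∀ k, G (k + 1) = removeMatching (G k) (M k)
  matching : ∀ k, IsMatching (G k) (M k)
  opt : ∀ k, ∀ M' : Finset (Sym2 V), IsMatching (G k) M' →
    matchWeight (nsbWeight (G k) (Ufun M k)) M' ≤ matchWeight (nsbWeight (G k) (Ufun M k)) (M k)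

/-- An LC-NSB evacuation run on the initial multigraph `w0`. -/
structure LCNSBRun (w0 : V → V → ℕ) where
  G : ℕ → V → V → ℕ
  M : ℕ → Finset (Sym2 V)
  init : G 0 = w0
  step : ∀ k, G (k + 1) = removeMatching (G k) (M k)
  matching : ∀ k, IsMatching (G k) (M k)
  opt : ∀ k, ∀ M' : Finset (Sym2 V), IsMatching (G k) M' →
    matchWeight (lcnsbWeight (G k) (Ufun M k)) M' ≤
      matchWeight (lcnsbWeight (G k) (Ufun M k)) (M k)



open Finset

set_option linter.unusedSectionVars false

section Aux
variable {V : Type} [Fintype V] [DecidableEq V]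

lemma deg_le_maxDeg (w : V → V → ℕ) (v : V) : deg w v ≤ maxDeg w :=
  Finset.le_sup (Finset.mem_univ v)

lemma maxDeg_le_iff {w : V → V → ℕ} {K : ℕ} : maxDeg w ≤ K ↔ ∀ v, deg w v ≤ K := by
  simp [maxDeg, Finset.sup_le_iff]

lemma saturates_iff {M : Finset (Sym2 V)} {v : V} :
    Saturates M v ↔ ∃ u, s(v, u) ∈ M := by
  constructor
  · rintro ⟨e, he, hv⟩
    induction e with
    | _ x y =>
      rcases Sym2.mem_iff.mp hv with rfl | rfl
      · exact ⟨y, he⟩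
      · exact ⟨x, by rwa [Sym2.eq_swap]⟩
  · rintro ⟨u, hu⟩
    exact ⟨s(v, u), hu, by simp⟩

lemma pair_unique {w : V → V → ℕ} {M : Finset (Sym2 V)} (hM : IsMatching w M)
    {v u u' : V} (h : s(v, u) ∈ M) (h' : s(v, u') ∈ M) : u = u' := by
  by_cases heq : s(v, u) = s(v, u')
  · rcases Sym2.eq_iff.mp heq with ⟨-, h2⟩ | ⟨h1, h2⟩
    · exact h2
    · exact h2.trans h1
  · exact absurd (by simp : v ∈ s(v, u')) (hM.2.2 _ h _ h' heq v (by simp))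

lemma removeMatching_le (w : V → V → ℕ) (M : Finset (Sym2 V)) (u v : V) :
    removeMatching w M u v ≤ w u v := by
  unfold removeMatching; split <;> omega

lemma removeMatching_symm {w : V → V → ℕ} (hs : ∀ u v, w u v = w v u) (M : Finset (Sym2 V))
    (u v : V) : removeMatching w M u v = removeMatching w M v u := by
  unfold removeMatching
  rw [show s(u, v) = s(v, u) from Sym2.eq_swap, hs u v]

lemma removeMatching_loopless {w : V → V → ℕ} (hl : ∀ v, w v v = 0) (M : Finset (Sym2 V))
    (v : V) : removeMatching w M v v = 0 := by
  unfold removeMatching; split <;> simp [hl v]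

lemma deg_removeMatching {w : V → V → ℕ} {M : Finset (Sym2 V)} (hM : IsMatching w M) (v : V) :
    deg (removeMatching w M) v + (if Saturates M v then 1 else 0) = deg w v := by
  have hpt : ∀ u, removeMatching w M v u + (if s(v, u) ∈ M then 1 else 0) = w v u := by
    intro u
    unfold removeMatching
    by_cases h : s(v, u) ∈ M
    · have := hM.2.1 v u h
      simp only [if_pos h]
      omega
    · simp [h]
  have hsum : deg (removeMatching w M) v + ∑ u, (if s(v, u) ∈ M then 1 else 0) = deg w v := by
    unfold deg
    rw [← Finset.sum_add_distrib]
    exact Finset.sum_congr rfl fun u _ => hpt u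
  have hcard : (∑ u, (if s(v, u) ∈ M then 1 else 0)) = (if Saturates M v then 1 else 0) := by
    by_cases hs : Saturates M v
    · obtain ⟨u₀, hu₀⟩ := saturates_iff.mp hs
      rw [if_pos hs]
      rw [Finset.sum_eq_single u₀]
      · rw [if_pos hu₀]
      · intro b _ hb
        rw [if_neg]
        intro hmem
        exact hb (pair_unique hM hmem hu₀)
      · intro h; exact absurd (Finset.mem_univ u₀) h
    · rw [if_neg hs]
      apply Finset.sum_eq_zero
      intro u _
      rw [if_neg]
      intro hmem
      exact hs ⟨_, hmem, by simp⟩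
  rw [← hcard]; exact hsum

lemma deg_removeMatching_le {w : V → V → ℕ} {M : Finset (Sym2 V)} (hM : IsMatching w M)
    (v : V) : deg (removeMatching w M) v ≤ deg w v := by
  have := deg_removeMatching hM v; omega

lemma isMatching_insert {w : V → V → ℕ} (hs : ∀ u v, w u v = w v u) {M : Finset (Sym2 V)}
    (hM : IsMatching w M) {u v : V} (huv : u ≠ v) (h1 : 1 ≤ w u v)
    (hu : ¬ Saturates M u) (hv : ¬ Saturates M v) :
    IsMatching w (insert s(u, v) M) := by
  refine ⟨?_, ?_, ?_⟩
  · intro e he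
    rcases Finset.mem_insert.mp he with rfl | he
    · simpa using huv
    · exact hM.1 e he
  · intro a b hab
    rcases Finset.mem_insert.mp hab with heq | h
    · rcases Sym2.eq_iff.mp heq with ⟨rfl, rfl⟩ | ⟨rfl, rfl⟩
      · exact h1
      · rw [hs]; exact h1
    · exact hM.2.1 a b h
  · intro e he f hf hef x hxe
    rcases Finset.mem_insert.mp he with he1 | he2
    · rcases Finset.mem_insert.mp hf with hf1 | hf2
      · exact absurd (he1.trans hf1.symm) hef
      · subst he1
        intro hxf
        rcases Sym2.mem_iff.mp hxe with rfl | rfl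
        · exact hu ⟨f, hf2, hxf⟩
        · exact hv ⟨f, hf2, hxf⟩
    · rcases Finset.mem_insert.mp hf with hf1 | hf2
      · subst hf1
        intro hxf
        rcases Sym2.mem_iff.mp hxf with rfl | rfl
        · exact hu ⟨e, he2, hxe⟩
        · exact hv ⟨e, he2, hxe⟩
      · exact hM.2.2 e he2 f hf2 hef x hxe

lemma isMatching_empty (w : V → V → ℕ) : IsMatching w (∅ : Finset (Sym2 V)) :=
  ⟨by simp, by simp, by simp⟩

lemma exists_maximal_matching_above {w : V → V → ℕ} {C : Finset (Sym2 V)}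
    (hC : IsMatching w C) :
    ∃ M, IsMatching w M ∧ C ⊆ M ∧ ∀ e, e ∉ M → ¬ IsMatching w (insert e M) := by
  classical
  obtain ⟨M, hMmem, hmaxM⟩ := Finset.exists_max_image
    ((Finset.univ : Finset (Finset (Sym2 V))).filter fun N => IsMatching w N ∧ C ⊆ N)
    Finset.card ⟨C, by simp [hC]⟩
  simp only [Finset.mem_filter, Finset.mem_univ, true_and] at hMmem
  refine ⟨M, hMmem.1, hMmem.2, ?_⟩
  intro e he hins
  have hmem : insert e M ∈
      (Finset.univ : Finset (Finset (Sym2 V))).filter fun N => IsMatching w N ∧ C ⊆ N := by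
    simp only [Finset.mem_filter, Finset.mem_univ, true_and]
    exact ⟨hins, hMmem.2.trans (Finset.subset_insert e M)⟩
  have hc := hmaxM _ hmem
  rw [Finset.card_insert_of_notMem he] at hc
  omega

lemma hall_cover {w : V → V → ℕ} (hs : ∀ u v, w u v = w v u) {S : Finset V} {D : ℕ}
    (hD : 1 ≤ D) (hSdeg : ∀ v ∈ S, deg w v = D) (hdegle : ∀ v, deg w v ≤ D) :
    ∃ f : V → V, Set.InjOn f ↑S ∧ ∀ v ∈ S, 1 ≤ w v (f v) := by
  classical
  set t : {x // x ∈ S} → Finset V := fun i => Finset.univ.filter (fun u => 1 ≤ w i.1 u) with ht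
  have hall : ∀ s : Finset {x // x ∈ S}, s.card ≤ (s.biUnion t).card := by
    intro s
    set T := s.biUnion t with hT
    have key : D * s.card ≤ D * T.card := by
      have h1 : ∑ i ∈ s, deg w i.1 = D * s.card := by
        rw [Finset.sum_congr rfl (fun i _ => hSdeg i.1 i.2), Finset.sum_const, smul_eq_mul,
          mul_comm]
      have h2 : ∀ i ∈ s, deg w i.1 = ∑ u ∈ T, w i.1 u := by
        intro i hi
        unfold deg
        refine (Finset.sum_subset (Finset.subset_univ T) ?_).symm
        intro u _ hu
        by_contra hw0
        exact hu (Finset.mem_biUnion.mpr ⟨i, hi,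
          Finset.mem_filter.mpr ⟨Finset.mem_univ _, Nat.one_le_iff_ne_zero.mpr hw0⟩⟩)
      have h3 : ∀ u ∈ T, (∑ i ∈ s, w i.1 u) ≤ D := by
        intro u _
        have e1 : (∑ i ∈ s, w i.1 u) = ∑ x ∈ s.image Subtype.val, w x u := by
          rw [Finset.sum_image]
          intro a _ b _ hab
          exact Subtype.ext hab
        have e2 : (∑ x ∈ s.image Subtype.val, w x u) ≤ ∑ x, w x u :=
          Finset.sum_le_sum_of_subset (Finset.subset_univ _)
        have e3 : (∑ x, w x u) = deg w u := by
          unfold deg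
          exact Finset.sum_congr rfl fun x _ => hs x u
        rw [e1]
        exact le_trans e2 (e3 ▸ hdegle u)
      calc D * s.card = ∑ i ∈ s, deg w i.1 := h1.symm
        _ = ∑ i ∈ s, ∑ u ∈ T, w i.1 u := Finset.sum_congr rfl h2
        _ = ∑ u ∈ T, ∑ i ∈ s, w i.1 u := Finset.sum_comm
        _ ≤ ∑ _u ∈ T, D := Finset.sum_le_sum h3
        _ = D * T.card := by rw [Finset.sum_const, smul_eq_mul, mul_comm]
    exact Nat.le_of_mul_le_mul_left key hD
  obtain ⟨f₀, hf₀inj, hf₀mem⟩ := (Finset.all_card_le_biUnion_card_iff_existsInjective' t).mp hall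
  refine ⟨fun v => if h : v ∈ S then f₀ ⟨v, h⟩ else v, ?_, ?_⟩
  · intro a ha b hb heq
    have ha' : a ∈ S := ha
    have hb' : b ∈ S := hb
    dsimp only at heq
    rw [dif_pos ha', dif_pos hb'] at heq
    have := hf₀inj heq
    exact congrArg Subtype.val this
  · intro v hv
    dsimp only
    rw [dif_pos hv]
    have := hf₀mem ⟨v, hv⟩
    rw [ht] at this
    exact (Finset.mem_filter.mp this).2

lemma isMatching_of_form {w : V → V → ℕ} (hs : ∀ u v, w u v = w v u) {S : Finset V} {f : V → V}
    (hw : ∀ v ∈ S, 1 ≤ w v (f v)) (hne : ∀ v ∈ S, f v ≠ v)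
    {M : Finset (Sym2 V)}
    (hform : ∀ e ∈ M, ∃ v ∈ S, e = s(v, f v))
    (hdisj : ∀ e ∈ M, ∀ e' ∈ M, e ≠ e' → ∀ x : V, x ∈ e → x ∉ e') :
    IsMatching w M := by
  refine ⟨?_, ?_, hdisj⟩
  · intro e he
    obtain ⟨v, hv, rfl⟩ := hform e he
    simpa using fun h => (hne v hv) h.symm
  · intro a b hab
    obtain ⟨v, hv, heq⟩ := hform _ hab
    rcases Sym2.eq_iff.mp heq with ⟨h1, h2⟩ | ⟨h1, h2⟩
    · rw [h1, h2]; exact hw v hv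
    · rw [h1, h2, hs]; exact hw v hv

end Aux

set_option linter.unusedSectionVars false

section Extract
variable {V : Type} [Fintype V] [DecidableEq V]

lemma extract_matching (w : V → V → ℕ) (hs : ∀ u v, w u v = w v u) :
    ∀ (n : ℕ) (S : Finset V) (f : V → V) (χ : V → Bool),
      S.card ≤ n →
      (∀ v ∈ S, 1 ≤ w v (f v)) →
      (∀ v ∈ S, f v ≠ v) →
      Set.InjOn f ↑S →
      (∀ v ∈ S, f v ∈ S → χ (f v) = !χ v) →
      ∃ M, IsMatching w M ∧ (∀ v ∈ S, Saturates M v) ∧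
        (∀ e ∈ M, ∃ v ∈ S, e = s(v, f v)) := by
  intro n
  induction n with
  | zero =>
    intro S f χ hcard _ _ _ _
    have hSempty : S = ∅ := Finset.card_eq_zero.mp (Nat.le_zero.mp hcard)
    subst hSempty
    exact ⟨∅, isMatching_empty w, by simp, by simp⟩
  | succ n IH =>
    intro S f χ hcard hw hne hinj hχ
    rcases Finset.eq_empty_or_nonempty S with rfl | hSne
    · exact ⟨∅, isMatching_empty w, by simp, by simp⟩
    by_cases hcase : ∃ v₀ ∈ S, ∀ u ∈ S, f u ≠ v₀
    · -- CASE 1: chain start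
      obtain ⟨v₀, hv₀S, hnotarget⟩ := hcase
      set S' := S \ {v₀, f v₀} with hS'
      have hS'sub : S' ⊆ S := Finset.sdiff_subset
      have hv₀notin : v₀ ∉ S' := by simp [hS']
      have hfv₀notin : f v₀ ∉ S' := by simp [hS']
      have hcard' : S'.card ≤ n := by
        have hlt : S'.card < S.card :=
          Finset.card_lt_card ⟨hS'sub, fun hsub => hv₀notin (hsub hv₀S)⟩
        omega
      obtain ⟨M', hM', hsat', hform'⟩ := IH S' f χ hcard'
        (fun v hv => hw v (hS'sub hv)) (fun v hv => hne v (hS'sub hv))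
        (hinj.mono (by exact_mod_cast Finset.coe_subset.mpr hS'sub))
        (fun v hv hfv => hχ v (hS'sub hv) (hS'sub hfv))
      have hM'avoid : ∀ e ∈ M', ∀ x : V, x ∈ e → x ≠ v₀ ∧ x ≠ f v₀ := by
        intro e he x hx
        obtain ⟨u, huS', rfl⟩ := hform' e he
        have huS : u ∈ S := hS'sub huS'
        have hu1 : u ≠ v₀ := fun h => hv₀notin (h ▸ huS')
        have hu2 : u ≠ f v₀ := fun h => hfv₀notin (h ▸ huS')
        rcases Sym2.mem_iff.mp hx with rfl | rfl
        · exact ⟨hu1, hu2⟩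
        · refine ⟨hnotarget u huS, fun h => hu1 ?_⟩
          exact hinj (Finset.mem_coe.mpr huS) (Finset.mem_coe.mpr hv₀S) h
      have hunsat₁ : ¬ Saturates M' v₀ := by
        rintro ⟨e, he, hv⟩
        exact (hM'avoid e he v₀ hv).1 rfl
      have hunsat₂ : ¬ Saturates M' (f v₀) := by
        rintro ⟨e, he, hv⟩
        exact (hM'avoid e he _ hv).2 rfl
      refine ⟨insert s(v₀, f v₀) M',
        isMatching_insert hs hM' (fun h => hne v₀ hv₀S h.symm) (hw v₀ hv₀S) hunsat₁ hunsat₂,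
        ?_, ?_⟩
      · intro v hv
        by_cases h1 : v = v₀
        · exact ⟨s(v₀, f v₀), Finset.mem_insert_self _ _, by simp [h1]⟩
        by_cases h2 : v = f v₀
        · exact ⟨s(v₀, f v₀), Finset.mem_insert_self _ _, by simp [h2]⟩
        have hv' : v ∈ S' := by
          rw [hS', Finset.mem_sdiff]
          refine ⟨hv, ?_⟩
          simp only [Finset.mem_insert, Finset.mem_singleton]
          tauto
        obtain ⟨e, he, hx⟩ := hsat' v hv'
        exact ⟨e, Finset.mem_insert_of_mem he, hx⟩
      · intro e he
        rcases Finset.mem_insert.mp he with rfl | he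
        · exact ⟨v₀, hv₀S, rfl⟩
        · obtain ⟨u, hu, rfl⟩ := hform' e he
          exact ⟨u, hS'sub hu, rfl⟩
    · -- CASE 2: every vertex of S is an f-image: cycles
      push_neg at hcase
      obtain ⟨v₀, hv₀S⟩ := hSne
      have himage : S = S.image f := by
        apply Finset.eq_of_subset_of_card_le
        · intro v hv
          obtain ⟨u, huS, hfu⟩ := hcase v hv
          exact Finset.mem_image.mpr ⟨u, huS, hfu⟩
        · exact Finset.card_image_le
      have hfS : ∀ v ∈ S, f v ∈ S := by
        intro v hv
        rw [himage]
        exact Finset.mem_image_of_mem f hv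
      have hiter : ∀ i, f^[i] v₀ ∈ S := by
        intro i
        induction i with
        | zero => simpa using hv₀S
        | succ i ih => rw [Function.iterate_succ_apply']; exact hfS _ ih
      have hcancel : ∀ (k : ℕ) (x y : V), x ∈ S → y ∈ S → f^[k] x = f^[k] y → x = y := by
        intro k
        induction k with
        | zero => intro x y _ _ h; simpa using h
        | succ k ih =>
          intro x y hx hy h
          rw [Function.iterate_succ_apply, Function.iterate_succ_apply] at h
          exact hinj (Finset.mem_coe.mpr hx) (Finset.mem_coe.mpr hy)
            (ih (f x) (f y) (hfS x hx) (hfS y hy) h)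
      have hper : ∃ k, 0 < k ∧ f^[k] v₀ = v₀ := by
        obtain ⟨a, ha, b, hb, hab, heq⟩ := Finset.exists_ne_map_eq_of_card_lt_of_maps_to
          (s := Finset.range (S.card + 1)) (t := S) (by simp) (fun i _ => hiter i)
        rcases Nat.lt_or_ge a b with h | h
        · refine ⟨b - a, by omega, ?_⟩
          have hkey : f^[a] (f^[b - a] v₀) = f^[a] v₀ := by
            rw [← Function.iterate_add_apply, (by omega : a + (b - a) = b)]
            exact heq.symm
          exact hcancel a _ _ (hiter _) hv₀S hkey
        · have h' : b < a := lt_of_le_of_ne h (Ne.symm hab)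
          refine ⟨a - b, by omega, ?_⟩
          have hkey : f^[b] (f^[a - b] v₀) = f^[b] v₀ := by
            rw [← Function.iterate_add_apply, (by omega : b + (a - b) = a)]
            exact heq
          exact hcancel b _ _ (hiter _) hv₀S hkey
      have hmspec := Nat.find_spec hper
      set m := Nat.find hper with hmdef
      obtain ⟨hmpos, hmfix⟩ := hmspec
      have hmmin : ∀ k, 0 < k → k < m → f^[k] v₀ ≠ v₀ := by
        intro k hk hkm hfix
        exact Nat.find_min hper hkm ⟨hk, hfix⟩
      have hm1 : m ≠ 1 := by
        intro h
        apply hne v₀ hv₀S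
        rw [h] at hmfix
        simpa using hmfix
      have hm2 : 2 ≤ m := by omega
      have hpar : ∀ i, χ (f^[i] v₀) = if Even i then χ v₀ else !(χ v₀) := by
        intro i
        induction i with
        | zero => simp
        | succ i ih =>
          rw [Function.iterate_succ_apply',
            hχ _ (hiter i)
              (by have h := hiter (i + 1); rwa [Function.iterate_succ_apply'] at h), ih]
          by_cases h : Even i
          · simp [h, Nat.even_add_one]
          · simp [h, Nat.even_add_one]
      have hmeven : Even m := by
        by_contra hodd
        have hp := hpar m
        rw [hmfix, if_neg hodd] at hp
        exact absurd hp (by simp)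
      obtain ⟨t, ht⟩ := hmeven
      have htpos : 1 ≤ t := by omega
      have hdist : ∀ i j, i < m → j < m → f^[i] v₀ = f^[j] v₀ → i = j := by
        have haux : ∀ i j, i < j → j < m → f^[i] v₀ = f^[j] v₀ → False := by
          intro i j hij hjm heq
          have hkey : f^[i] (f^[j - i] v₀) = f^[i] v₀ := by
            rw [← Function.iterate_add_apply, (by omega : i + (j - i) = j)]
            exact heq.symm
          have := hcancel i _ _ (hiter _) hv₀S hkey
          exact hmmin (j - i) (by omega) (by omega) this
        intro i j hi hj heq
        rcases lt_trichotomy i j with h | h | h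
        · exact absurd (haux i j h hj heq) id
        · exact h
        · exact absurd (haux j i h hi heq.symm) id
      set O := (Finset.range m).image (fun i => f^[i] v₀) with hO
      have hv₀O : v₀ ∈ O :=
        Finset.mem_image.mpr ⟨0, Finset.mem_range.mpr (by omega), rfl⟩
      set S' := S \ O with hS'
      have hS'sub : S' ⊆ S := Finset.sdiff_subset
      have hcard' : S'.card ≤ n := by
        have hlt : S'.card < S.card :=
          Finset.card_lt_card ⟨hS'sub,
            fun hsub => (Finset.mem_sdiff.mp (hsub hv₀S)).2 hv₀O⟩
        omega
      obtain ⟨M', hM', hsat', hform'⟩ := IH S' f χ hcard'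
        (fun v hv => hw v (hS'sub hv)) (fun v hv => hne v (hS'sub hv))
        (hinj.mono (by exact_mod_cast Finset.coe_subset.mpr hS'sub))
        (fun v hv hfv => hχ v (hS'sub hv) (hS'sub hfv))
      have hfS'avoid : ∀ u ∈ S', f u ∉ O := by
        intro u hu hfu
        obtain ⟨k, hk, hfk⟩ := Finset.mem_image.mp hfu
        have hkm := Finset.mem_range.mp hk
        have huO : u ∈ O := by
          rcases Nat.eq_zero_or_pos k with rfl | hkpos
          · have h1 : f (f^[m - 1] v₀) = f u := by
              have h0 : f^[m - 1 + 1] v₀ = v₀ := by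
                rw [(by omega : m - 1 + 1 = m)]; exact hmfix
              rw [Function.iterate_succ_apply'] at h0
              rw [h0]
              simpa using hfk
            have h2 := hinj (Finset.mem_coe.mpr (hiter (m - 1)))
              (Finset.mem_coe.mpr (hS'sub hu)) h1
            rw [← h2]
            exact Finset.mem_image.mpr ⟨m - 1, Finset.mem_range.mpr (by omega), rfl⟩
          · have h1 : f (f^[k - 1] v₀) = f u := by
              have h0 : f^[k - 1 + 1] v₀ = f u := by
                rw [(by omega : k - 1 + 1 = k)]; exact hfk
              rwa [Function.iterate_succ_apply'] at h0
            have h2 := hinj (Finset.mem_coe.mpr (hiter (k - 1)))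
              (Finset.mem_coe.mpr (hS'sub hu)) h1
            rw [← h2]
            exact Finset.mem_image.mpr ⟨k - 1, Finset.mem_range.mpr (by omega), rfl⟩
        exact (Finset.mem_sdiff.mp hu).2 huO
      set MO := (Finset.range t).image (fun i => s(f^[2 * i] v₀, f^[2 * i + 1] v₀)) with hMO
      have hMOform : ∀ e ∈ MO, ∃ v ∈ S, e = s(v, f v) := by
        intro e he
        obtain ⟨i, _, rfl⟩ := Finset.mem_image.mp he
        refine ⟨f^[2 * i] v₀, hiter _, ?_⟩
        rw [Function.iterate_succ_apply']
      have hMOvert : ∀ e ∈ MO, ∀ x : V, x ∈ e → ∃ j, j < m ∧ x = f^[j] v₀ := by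
        intro e he x hx
        obtain ⟨i, hi, rfl⟩ := Finset.mem_image.mp he
        have hi' := Finset.mem_range.mp hi
        rcases Sym2.mem_iff.mp hx with rfl | rfl
        · exact ⟨2 * i, by omega, rfl⟩
        · exact ⟨2 * i + 1, by omega, rfl⟩
      have hM'vertO : ∀ e ∈ M', ∀ x : V, x ∈ e → x ∉ O := by
        intro e he x hx
        obtain ⟨u, hu, rfl⟩ := hform' e he
        rcases Sym2.mem_iff.mp hx with rfl | rfl
        · exact (Finset.mem_sdiff.mp hu).2
        · exact hfS'avoid u hu
      have hdisj : ∀ e ∈ MO ∪ M', ∀ e' ∈ MO ∪ M', e ≠ e' → ∀ x : V, x ∈ e → x ∉ e' := by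
        intro e he e' he' hee' x hxe hxe'
        rcases Finset.mem_union.mp he with he | he <;>
          rcases Finset.mem_union.mp he' with he' | he'
        · -- both MO
          obtain ⟨i, hi, rfl⟩ := Finset.mem_image.mp he
          obtain ⟨j, hj, rfl⟩ := Finset.mem_image.mp he'
          have hi' := Finset.mem_range.mp hi
          have hj' := Finset.mem_range.mp hj
          have hij : i ≠ j := fun h => hee' (by rw [h])
          rcases Sym2.mem_iff.mp hxe with rfl | rfl <;>
            rcases Sym2.mem_iff.mp hxe' with heq | heq <;>
            · have hd := hdist _ _ (by omega) (by omega) heq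
              omega
        · obtain ⟨j, hjm, hx⟩ := hMOvert _ he x hxe
          have : x ∈ O := Finset.mem_image.mpr ⟨j, Finset.mem_range.mpr hjm, hx.symm⟩
          exact hM'vertO _ he' x hxe' this
        · obtain ⟨j, hjm, hx⟩ := hMOvert _ he' x hxe'
          have : x ∈ O := Finset.mem_image.mpr ⟨j, Finset.mem_range.mpr hjm, hx.symm⟩
          exact hM'vertO _ he x hxe this
        · exact hM'.2.2 e he e' he' hee' x hxe hxe'
      have hform : ∀ e ∈ MO ∪ M', ∃ v ∈ S, e = s(v, f v) := by
        intro e he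
        rcases Finset.mem_union.mp he with he | he
        · exact hMOform e he
        · obtain ⟨u, hu, rfl⟩ := hform' e he
          exact ⟨u, hS'sub hu, rfl⟩
      refine ⟨MO ∪ M', isMatching_of_form hs hw hne hform hdisj, ?_, hform⟩
      intro v hv
      by_cases hvO : v ∈ O
      · obtain ⟨i, hi, hfi⟩ := Finset.mem_image.mp hvO
        have hi' := Finset.mem_range.mp hi
        obtain ⟨j, hj | hj⟩ := Nat.even_or_odd' i
        · refine ⟨s(f^[2 * j] v₀, f^[2 * j + 1] v₀), Finset.mem_union_left _
            (Finset.mem_image.mpr ⟨j, Finset.mem_range.mpr (by omega), rfl⟩), ?_⟩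
          rw [← hfi, hj]
          simp [Nat.two_mul]
        · refine ⟨s(f^[2 * j] v₀, f^[2 * j + 1] v₀), Finset.mem_union_left _
            (Finset.mem_image.mpr ⟨j, Finset.mem_range.mpr (by omega), rfl⟩), ?_⟩
          rw [← hfi, hj]
          simp [Nat.two_mul]
      · obtain ⟨e, he, hx⟩ := hsat' v (Finset.mem_sdiff.mpr ⟨hv, hvO⟩)
        exact ⟨e, Finset.mem_union_right _ he, hx⟩

end Extract

/-- If `Δ ≥ 2`, there are three successive matchings whose removal
decreases the maximum degree by at least two. -/
theorem three_matchings_decrease_maxdeg {V : Type} [Fintype V] [DecidableEq V]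
    (w : V → V → ℕ) (hsymm : ∀ u v, w u v = w v u) (hloop : ∀ v, w v v = 0)
    (hn : 2 ≤ Fintype.card V) (hΔ : 2 ≤ maxDeg w) :
    ∃ M₁ M₂ M₃ : Finset (Sym2 V),
      IsMatching w M₁ ∧
      IsMatching (removeMatching w M₁) M₂ ∧
      IsMatching (removeMatching (removeMatching w M₁) M₂) M₃ ∧
      maxDeg (removeMatching (removeMatching (removeMatching w M₁) M₂) M₃) ≤
        maxDeg w - 2 := by
  classical
  set Δ := maxDeg w with hΔdef
  -- Step 1: a maximal matching M₁
  obtain ⟨M₁, hM₁, -, hmax₁⟩ := exists_maximal_matching_above (isMatching_empty w)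
  set w₁ := removeMatching w M₁ with hw₁def
  have hsymm₁ : ∀ u v, w₁ u v = w₁ v u := removeMatching_symm hsymm M₁
  have hloop₁ : ∀ v, w₁ v v = 0 := removeMatching_loopless hloop M₁
  have hw₁le : ∀ u v, w₁ u v ≤ w u v := removeMatching_le w M₁
  have hdeg₁ : ∀ v, deg w₁ v + (if Saturates M₁ v then 1 else 0) = deg w v :=
    deg_removeMatching hM₁
  have hdeg₁le : ∀ v, deg w₁ v ≤ Δ := by
    intro v
    have h1 := hdeg₁ v
    have h2 := deg_le_maxDeg w v
    omega
  -- the set of vertices of degree Δ in w₁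
  set A := Finset.univ.filter (fun v => deg w₁ v = Δ) with hAdef
  have hAdeg : ∀ a ∈ A, deg w₁ a = Δ := fun a ha => (Finset.mem_filter.mp ha).2
  have hAunsat : ∀ a ∈ A, ¬ Saturates M₁ a := by
    intro a ha hsat
    have h1 := hdeg₁ a
    rw [if_pos hsat] at h1
    have h2 := hAdeg a ha
    have h3 := deg_le_maxDeg w a
    omega
  have hAindep : ∀ a ∈ A, ∀ b ∈ A, a ≠ b → ¬ (1 ≤ w₁ a b) := by
    intro a ha b hb hab h1
    have h1' : 1 ≤ w a b := le_trans h1 (hw₁le a b)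
    have hnotmem : s(a, b) ∉ M₁ := fun hmem => hAunsat a ha ⟨_, hmem, by simp⟩
    exact hmax₁ s(a, b) hnotmem
      (isMatching_insert hsymm hM₁ hab h1' (hAunsat a ha) (hAunsat b hb))
  -- Step 2: Hall system saturating A, extended to a maximal matching M₂
  have hΔpos : 1 ≤ Δ := by omega
  obtain ⟨g, hginj, hg1⟩ := hall_cover hsymm₁ hΔpos hAdeg hdeg₁le
  have hgne : ∀ a ∈ A, g a ≠ a := by
    intro a ha h
    have := hg1 a ha
    rw [h, hloop₁ a] at this
    omega
  have hgA : ∀ a ∈ A, g a ∉ A := by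
    intro a ha hga
    exact hAindep a ha (g a) hga (fun h => hgne a ha h.symm) (hg1 a ha)
  set C := A.image (fun a => s(a, g a)) with hCdef
  have hCform : ∀ e ∈ C, ∃ v ∈ A, e = s(v, g v) := by
    intro e he
    obtain ⟨a, ha, rfl⟩ := Finset.mem_image.mp he
    exact ⟨a, ha, rfl⟩
  have hCmatch : IsMatching w₁ C := by
    refine isMatching_of_form hsymm₁ hg1 hgne hCform ?_
    intro e he e' he' hee' x hxe hxe'
    obtain ⟨a, ha, rfl⟩ := hCform e he
    obtain ⟨b, hb, rfl⟩ := hCform e' he'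
    have hab : a ≠ b := fun h => hee' (by rw [h])
    rcases Sym2.mem_iff.mp hxe with rfl | rfl <;> rcases Sym2.mem_iff.mp hxe' with heq | heq
    · exact hab heq
    · exact hgA b hb (heq ▸ ha)
    · exact hgA a ha (heq ▸ hb)
    · exact hab (hginj (Finset.mem_coe.mpr ha) (Finset.mem_coe.mpr hb) heq)
  obtain ⟨M₂, hM₂, hCM₂, hmax₂⟩ := exists_maximal_matching_above hCmatch
  have hAsat : ∀ a ∈ A, Saturates M₂ a :=
    fun a ha => ⟨s(a, g a), hCM₂ (Finset.mem_image_of_mem _ ha), by simp⟩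
  set w₂ := removeMatching w₁ M₂ with hw₂def
  have hsymm₂ : ∀ u v, w₂ u v = w₂ v u := removeMatching_symm hsymm₁ M₂
  have hloop₂ : ∀ v, w₂ v v = 0 := removeMatching_loopless hloop₁ M₂
  have hw₂le : ∀ u v, w₂ u v ≤ w₁ u v := removeMatching_le w₁ M₂
  have hdeg₂ : ∀ v, deg w₂ v + (if Saturates M₂ v then 1 else 0) = deg w₁ v :=
    deg_removeMatching hM₂
  have hdeg₂le : ∀ v, deg w₂ v ≤ Δ - 1 := by
    intro v
    by_cases hvA : v ∈ A
    · have h1 := hdeg₂ v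
      rw [if_pos (hAsat v hvA)] at h1
      have h2 := hAdeg v hvA
      omega
    · have hne : deg w₁ v ≠ Δ :=
        fun h => hvA (Finset.mem_filter.mpr ⟨Finset.mem_univ v, h⟩)
      have h1 := hdeg₁le v
      have h2 := hdeg₂ v
      omega
  -- Step 3: the set of vertices of degree Δ - 1 in w₂
  set B := Finset.univ.filter (fun v => deg w₂ v = Δ - 1) with hBdef
  have hBdeg : ∀ v ∈ B, deg w₂ v = Δ - 1 := fun v hv => (Finset.mem_filter.mp hv).2
  have hBunsat_notA : ∀ v ∈ B, v ∉ A → ¬ Saturates M₂ v := by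
    intro v hv hvA hsat
    have h2 := hdeg₂ v
    rw [if_pos hsat] at h2
    have h3 := hBdeg v hv
    have h4 : deg w₁ v = Δ := by omega
    exact hvA (Finset.mem_filter.mpr ⟨Finset.mem_univ v, h4⟩)
  have hD1 : 1 ≤ Δ - 1 := by omega
  obtain ⟨g₂, hg₂inj, hg₂1⟩ := hall_cover hsymm₂ hD1 hBdeg hdeg₂le
  have hg₂ne : ∀ v ∈ B, g₂ v ≠ v := by
    intro v hv h
    have := hg₂1 v hv
    rw [h, hloop₂ v] at this
    omega
  set χ : V → Bool := fun v => decide (v ∈ A) with hχdef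
  have hχB : ∀ v ∈ B, g₂ v ∈ B → χ (g₂ v) = !χ v := by
    intro v hv hgv
    have hvne : v ≠ g₂ v := fun h => hg₂ne v hv h.symm
    have hw₁vg : 1 ≤ w₁ v (g₂ v) := le_trans (hg₂1 v hv) (hw₂le _ _)
    by_cases h1 : v ∈ A <;> by_cases h2 : g₂ v ∈ A
    · exact absurd hw₁vg (hAindep v h1 _ h2 hvne)
    · simp [hχdef, h1, h2]
    · simp [hχdef, h1, h2]
    · exfalso
      have hu := hBunsat_notA v hv h1
      have hv' := hBunsat_notA _ hgv h2
      have hnotmem : s(v, g₂ v) ∉ M₂ := fun hmem => hu ⟨_, hmem, by simp⟩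
      exact hmax₂ s(v, g₂ v) hnotmem
        (isMatching_insert hsymm₁ hM₂ hvne hw₁vg hu hv')
  obtain ⟨M₃, hM₃, hBsat, -⟩ := extract_matching w₂ hsymm₂ B.card B g₂ χ le_rfl
    hg₂1 hg₂ne hg₂inj hχB
  have hdeg₃ : ∀ v, deg (removeMatching w₂ M₃) v + (if Saturates M₃ v then 1 else 0) = deg w₂ v :=
    deg_removeMatching hM₃
  refine ⟨M₁, M₂, M₃, hM₁, hM₂, hM₃, ?_⟩
  show maxDeg (removeMatching w₂ M₃) ≤ Δ - 2
  rw [maxDeg_le_iff]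
  intro v
  have h3 := hdeg₃ v
  by_cases hvB : v ∈ B
  · have hsat := hBsat v hvB
    rw [if_pos hsat] at h3
    have h4 := hBdeg v hvB
    omega
  · have hne : deg w₂ v ≠ Δ - 1 :=
      fun h => hvB (Finset.mem_filter.mpr ⟨Finset.mem_univ v, h⟩)
    have h4 := hdeg₂le v
    omega

end NSBPaper
end

section
/- The edge multiset of every loopless multigraph G on n ≥ 2 vertices with maximum degree Δ can be partitioned into at most ⌊3Δ/2⌋ matchings; that is, there exist matchings M₁,…,M_T of G with T ≤ ⌊3Δ/2⌋ such that for every pair of vertices {u,v}, the number of indices j with {u,v} ∈ M_j equals w(u,v). -/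
open scoped Classical

namespace NSBPaper

variable {V : Type} [Fintype V] [DecidableEq V]

set_option linter.unusedSectionVars false
set_option linter.unusedVariables false

section ShannonProof

section Helpers

/-- two distinct members of a Sym2 determine it -/
lemma sym2_eq_of_two_mem {e : Sym2 V} {u v : V} (hu : u ∈ e) (hv : v ∈ e) (hne : u ≠ v) :
    e = s(u, v) := by
  induction e with
  | _ a b =>
    rw [Sym2.mem_iff] at hu hv
    rcases hu with rfl | rfl <;> rcases hv with rfl | rfl
    · exact absurd rfl hne
    · rfl
    · exact Sym2.eq_swap
    · exact absurd rfl hne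

lemma IsMatching.mono {w w' : V → V → ℕ} {M : Finset (Sym2 V)}
    (h : ∀ u v, w u v ≤ w' u v) (hM : IsMatching w M) : IsMatching w' M :=
  ⟨hM.1, fun u v huv => le_trans (hM.2.1 u v huv) (h u v), hM.2.2⟩

lemma IsMatching.subset {w : V → V → ℕ} {M M' : Finset (Sym2 V)}
    (h : M' ⊆ M) (hM : IsMatching w M) : IsMatching w M' :=
  ⟨fun e he => hM.1 e (h he), fun u v huv => hM.2.1 u v (h huv),
   fun e he f hf hef x hx => hM.2.2 e (h he) f (h hf) hef x hx⟩

lemma IsMatching.unique_at {w : V → V → ℕ} {M : Finset (Sym2 V)} (hM : IsMatching w M)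
    {e f : Sym2 V} {v : V} (he : e ∈ M) (hf : f ∈ M) (hve : v ∈ e) (hvf : v ∈ f) : e = f := by
  by_contra hne
  exact hM.2.2 e he f hf hne v hve hvf

lemma IsMatching.insert {w : V → V → ℕ} {M : Finset (Sym2 V)} (hM : IsMatching w M)
    {x y : V} (hxy : x ≠ y) (hx : ¬ Saturates M x) (hy : ¬ Saturates M y)
    (hw1 : 1 ≤ w x y) (hw2 : 1 ≤ w y x) : IsMatching w (insert s(x, y) M) := by
  refine ⟨?_, ?_, ?_⟩
  · intro e he
    rcases Finset.mem_insert.mp he with rfl | he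
    · simpa using hxy
    · exact hM.1 e he
  · intro u v huv
    rcases Finset.mem_insert.mp huv with h | h
    · rcases Sym2.eq_iff.mp h with ⟨rfl, rfl⟩ | ⟨rfl, rfl⟩
      · exact hw1
      · exact hw2
    · exact hM.2.1 u v h
  · intro e he f hf hef z hze hzf
    rcases Finset.mem_insert.mp he with he' | he'
    · rcases Finset.mem_insert.mp hf with hf' | hf'
      · exact hef (he'.trans hf'.symm)
      · subst he'
        rcases Sym2.mem_iff.mp hze with rfl | rfl
        · exact hx ⟨f, hf', hzf⟩
        · exact hy ⟨f, hf', hzf⟩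
    · rcases Finset.mem_insert.mp hf with hf' | hf'
      · subst hf'
        rcases Sym2.mem_iff.mp hzf with rfl | rfl
        · exact hx ⟨e, he', hze⟩
        · exact hy ⟨e, he', hze⟩
      · exact hM.2.2 e he' f hf' hef z hze hzf

lemma not_sat_erase {w : V → V → ℕ} {M : Finset (Sym2 V)} (hM : IsMatching w M)
    {e : Sym2 V} {v : V} (he : e ∈ M) (hv : v ∈ e) : ¬ Saturates (M.erase e) v := by
  rintro ⟨f, hf, hvf⟩
  have hfM := Finset.mem_of_mem_erase hf
  have : e = f := hM.unique_at he hfM hv hvf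
  exact (Finset.ne_of_mem_erase hf) this.symm

end Helpers

section Cnt

variable {t : ℕ}

/-- number of classes containing the pair `e` -/
noncomputable def cnt (M : Fin t → Finset (Sym2 V)) (e : Sym2 V) : ℕ :=
  (Finset.univ.filter fun j => e ∈ M j).card

lemma cnt_eq_sum (M : Fin t → Finset (Sym2 V)) (e : Sym2 V) :
    cnt M e = ∑ j, if e ∈ M j then 1 else 0 := by
  classical
  rw [cnt, Finset.card_filter]

lemma cnt_update (M : Fin t → Finset (Sym2 V)) (c : Fin t) (S : Finset (Sym2 V)) (e : Sym2 V) :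
    cnt (Function.update M c S) e + (if e ∈ M c then 1 else 0)
      = cnt M e + (if e ∈ S then 1 else 0) := by
  classical
  rw [cnt_eq_sum, cnt_eq_sum]
  have h1 : (fun j => if e ∈ (Function.update M c S) j then (1:ℕ) else 0)
      = Function.update (fun j => if e ∈ M j then (1:ℕ) else 0) c (if e ∈ S then 1 else 0) := by
    funext j
    by_cases hj : j = c
    · subst hj; simp
    · simp [Function.update_of_ne hj]
  rw [h1, Finset.sum_update_of_mem (Finset.mem_univ c),
    Finset.sum_eq_add_sum_sdiff_singleton_of_mem (Finset.mem_univ c)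
      (fun j => if e ∈ M j then (1:ℕ) else 0)]
  omega

lemma sat_of_mem {M : Finset (Sym2 V)} {e : Sym2 V} {v : V} (he : e ∈ M) (hv : v ∈ e) :
    Saturates M v := ⟨e, he, hv⟩

/-- key counting: sum over u of the indicator that s(v,u) is the excluded pair -/
lemma sum_ind_pair {a b : V} (hab : a ≠ b) (v : V) :
    (∑ u, if s(v, u) = s(a, b) then 1 else 0) = if v = a ∨ v = b then (1:ℕ) else 0 := by
  classical
  by_cases hva : v = a
  · subst hva
    rw [if_pos (Or.inl rfl)]
    have h : ∀ u : V, (s(v, u) = s(v, b)) ↔ (u = b) := by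
      intro u
      constructor
      · intro h
        rcases Sym2.eq_iff.mp h with ⟨-, h2⟩ | ⟨h1, -⟩
        · exact h2
        · exact absurd h1 hab
      · rintro rfl; rfl
    rw [Finset.sum_congr rfl fun u _ => if_congr (h u) rfl rfl]
    simp
  · by_cases hvb : v = b
    · subst hvb
      rw [if_pos (Or.inr rfl)]
      have h : ∀ u : V, (s(v, u) = s(a, v)) ↔ (u = a) := by
        intro u
        constructor
        · intro h
          rcases Sym2.eq_iff.mp h with ⟨h1, -⟩ | ⟨-, h2⟩
          · exact absurd h1 (fun hh => hab hh.symm)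
          · exact h2
        · rintro rfl; exact Sym2.eq_swap
      rw [Finset.sum_congr rfl fun u _ => if_congr (h u) rfl rfl]
      simp
    · rw [if_neg (by tauto)]
      refine Finset.sum_eq_zero fun u _ => ?_
      rw [if_neg]
      intro h
      rcases Sym2.eq_iff.mp h with ⟨h1, -⟩ | ⟨h1, -⟩ <;> tauto

/-- bound on number of classes saturating v, given the count function with one uncolored edge -/
lemma satCard_bound {t : ℕ} {w : V → V → ℕ} {M : Fin t → Finset (Sym2 V)} {a b : V}
    (hab : a ≠ b)
    (hcount : ∀ u v, cnt M (s(u, v)) + (if s(u, v) = s(a, b) then 1 else 0) = w u v) (v : V) :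
    (Finset.univ.filter fun j => Saturates (M j) v).card + (if v = a ∨ v = b then 1 else 0)
      ≤ deg w v := by
  classical
  have step2 : ∀ j : Fin t, (if Saturates (M j) v then (1:ℕ) else 0)
      ≤ ∑ u, if s(v, u) ∈ M j then 1 else 0 := by
    intro j
    by_cases hs : Saturates (M j) v
    · rw [if_pos hs]
      obtain ⟨e, he, hv⟩ := hs
      obtain ⟨u₀, rfl⟩ := Sym2.mem_iff_exists.mp hv
      calc (1:ℕ) = if s(v, u₀) ∈ M j then 1 else 0 := by rw [if_pos he]
        _ ≤ _ := Finset.single_le_sum (f := fun u => if s(v, u) ∈ M j then (1:ℕ) else 0)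
            (fun _ _ => Nat.zero_le _) (Finset.mem_univ u₀)
    · simp [hs]
  have h1 : (Finset.univ.filter fun j => Saturates (M j) v).card
      ≤ ∑ u, cnt M (s(v, u)) := by
    rw [Finset.card_filter]
    calc (∑ j, if Saturates (M j) v then (1:ℕ) else 0)
        ≤ ∑ j, ∑ u, if s(v, u) ∈ M j then 1 else 0 := Finset.sum_le_sum fun j _ => step2 j
      _ = ∑ u, ∑ j, if s(v, u) ∈ M j then 1 else 0 := Finset.sum_comm
      _ = ∑ u, cnt M (s(v, u)) := by simp [cnt_eq_sum]
  have h2 : (∑ u, cnt M (s(v, u))) + (if v = a ∨ v = b then 1 else 0) = deg w v := by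
    rw [← sum_ind_pair hab v, ← Finset.sum_add_distrib]
    exact Finset.sum_congr rfl fun u _ => hcount v u
  omega

lemma missCard_eq {t : ℕ} (M : Fin t → Finset (Sym2 V)) (v : V) :
    (Finset.univ.filter fun j => ¬ Saturates (M j) v).card
      + (Finset.univ.filter fun j => Saturates (M j) v).card = t := by
  classical
  rw [add_comm, Finset.card_filter_add_card_filter_not]
  simp

end Cnt

section Swap

variable (A B : Finset (Sym2 V)) (p₀ : V)

/-- the graph whose edges are the pairs in `A ∪ B` -/
def KG : SimpleGraph V where
  Adj u v := u ≠ v ∧ (s(u, v) ∈ A ∨ s(u, v) ∈ B)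
  symm := by
    refine ⟨?_⟩
    intro u v ⟨h1, h2⟩
    exact ⟨h1.symm, by rwa [Sym2.eq_swap]⟩
  loopless := ⟨fun v h => h.1 rfl⟩

/-- the chain (component) of `p₀` in the union of the two matchings -/
noncomputable def CS : Finset (Sym2 V) :=
  (A ∪ B).filter fun e => ∃ v, v ∈ e ∧ (KG A B).Reachable p₀ v

lemma KG_comm : KG A B = KG B A := by
  ext u v
  simp only [KG]
  tauto

lemma CS_comm : CS A B p₀ = CS B A p₀ := by
  unfold CS
  rw [Finset.union_comm, KG_comm]

/-- the swapped class -/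
noncomputable def SwA : Finset (Sym2 V) := (A \ CS A B p₀) ∪ (B ∩ CS A B p₀)

variable {A B p₀}

lemma mem_CS_iff {e : Sym2 V} {v : V} (he : e ∈ A ∪ B) (hv : v ∈ e) :
    e ∈ CS A B p₀ ↔ (KG A B).Reachable p₀ v := by
  constructor
  · intro hcs
    obtain ⟨-, u, hu, hru⟩ := Finset.mem_filter.mp hcs
    by_cases huv : u = v
    · rwa [huv] at hru
    · exact hru.trans (SimpleGraph.Adj.reachable
        ⟨huv, by rw [← sym2_eq_of_two_mem hu hv huv]; exact Finset.mem_union.mp he⟩)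
  · intro hr
    exact Finset.mem_filter.mpr ⟨he, v, hv, hr⟩

variable (w : V → V → ℕ)

lemma swap_isMatching (hA : IsMatching w A) (hB : IsMatching w B) :
    IsMatching w (SwA A B p₀) := by
  have hmem : ∀ e ∈ SwA A B p₀, e ∈ A ∪ B := by
    intro e he
    rcases Finset.mem_union.mp he with h | h
    · exact Finset.mem_union_left _ (Finset.mem_sdiff.mp h).1
    · exact Finset.mem_union_right _ (Finset.mem_inter.mp h).1
  refine ⟨?_, ?_, ?_⟩
  · intro e he
    rcases Finset.mem_union.mp (hmem e he) with h | h
    · exact hA.1 e h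
    · exact hB.1 e h
  · intro u v huv
    rcases Finset.mem_union.mp (hmem _ huv) with h | h
    · exact hA.2.1 u v h
    · exact hB.2.1 u v h
  · intro e he f hf hef z hze hzf
    rcases Finset.mem_union.mp he with he' | he' <;> rcases Finset.mem_union.mp hf with hf' | hf'
    · obtain ⟨heA, -⟩ := Finset.mem_sdiff.mp he'
      obtain ⟨hfA, -⟩ := Finset.mem_sdiff.mp hf'
      exact hA.2.2 e heA f hfA hef z hze hzf
    · obtain ⟨heA, hecs⟩ := Finset.mem_sdiff.mp he'
      obtain ⟨hfB, hfcs⟩ := Finset.mem_inter.mp hf'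
      have hrz : (KG A B).Reachable p₀ z :=
        (mem_CS_iff (Finset.mem_union_right _ hfB) hzf).mp hfcs
      exact hecs ((mem_CS_iff (Finset.mem_union_left _ heA) hze).mpr hrz)
    · obtain ⟨heB, hecs⟩ := Finset.mem_inter.mp he'
      obtain ⟨hfA, hfcs⟩ := Finset.mem_sdiff.mp hf'
      have hrz : (KG A B).Reachable p₀ z :=
        (mem_CS_iff (Finset.mem_union_right _ heB) hze).mp hecs
      exact hfcs ((mem_CS_iff (Finset.mem_union_left _ hfA) hzf).mpr hrz)
    · obtain ⟨heB, -⟩ := Finset.mem_inter.mp he'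
      obtain ⟨hfB, -⟩ := Finset.mem_inter.mp hf'
      exact hB.2.2 e heB f hfB hef z hze hzf

lemma swap_sat_reach {v : V} (hr : (KG A B).Reachable p₀ v) :
    Saturates (SwA A B p₀) v ↔ Saturates B v := by
  constructor
  · rintro ⟨e, he, hv⟩
    rcases Finset.mem_union.mp he with h | h
    · obtain ⟨heA, hecs⟩ := Finset.mem_sdiff.mp h
      exact absurd ((mem_CS_iff (Finset.mem_union_left _ heA) hv).mpr hr) hecs
    · exact ⟨e, (Finset.mem_inter.mp h).1, hv⟩
  · rintro ⟨e, he, hv⟩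
    have : e ∈ CS A B p₀ := (mem_CS_iff (Finset.mem_union_right _ he) hv).mpr hr
    exact ⟨e, Finset.mem_union_right _ (Finset.mem_inter.mpr ⟨he, this⟩), hv⟩

lemma swap_sat_not_reach {v : V} (hr : ¬ (KG A B).Reachable p₀ v) :
    Saturates (SwA A B p₀) v ↔ Saturates A v := by
  constructor
  · rintro ⟨e, he, hv⟩
    rcases Finset.mem_union.mp he with h | h
    · exact ⟨e, (Finset.mem_sdiff.mp h).1, hv⟩
    · obtain ⟨heB, hecs⟩ := Finset.mem_inter.mp h
      exact absurd ((mem_CS_iff (Finset.mem_union_right _ heB) hv).mp hecs) hr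
  · rintro ⟨e, he, hv⟩
    have : e ∉ CS A B p₀ := fun hcs => hr ((mem_CS_iff (Finset.mem_union_left _ he) hv).mp hcs)
    exact ⟨e, Finset.mem_union_left _ (Finset.mem_sdiff.mpr ⟨he, this⟩), hv⟩

/-- the indicator sum over the two classes is preserved by swapping -/
lemma swap_indicator (e : Sym2 V) :
    (if e ∈ SwA A B p₀ then 1 else 0) + (if e ∈ SwA B A p₀ then (1:ℕ) else 0)
      = (if e ∈ A then 1 else 0) + (if e ∈ B then 1 else 0) := by
  have hBA : CS B A p₀ = CS A B p₀ := (CS_comm A B p₀).symm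
  by_cases hcs : e ∈ CS A B p₀
  · have h1 : e ∈ SwA A B p₀ ↔ e ∈ B := by
      unfold SwA
      simp only [Finset.mem_union, Finset.mem_sdiff, Finset.mem_inter]
      tauto
    have h2 : e ∈ SwA B A p₀ ↔ e ∈ A := by
      unfold SwA
      rw [hBA]
      simp only [Finset.mem_union, Finset.mem_sdiff, Finset.mem_inter]
      tauto
    rw [if_congr h1 rfl rfl, if_congr h2 rfl rfl]
    omega
  · have h1 : e ∈ SwA A B p₀ ↔ e ∈ A := by
      unfold SwA
      simp only [Finset.mem_union, Finset.mem_sdiff, Finset.mem_inter]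
      tauto
    have h2 : e ∈ SwA B A p₀ ↔ e ∈ B := by
      unfold SwA
      rw [hBA]
      simp only [Finset.mem_union, Finset.mem_sdiff, Finset.mem_inter]
      tauto
    rw [if_congr h1 rfl rfl, if_congr h2 rfl rfl]

end Swap

/-- in a graph with max degree ≤ 2, a connected component cannot contain three distinct
vertices of degree ≤ 1.  Auxiliary induction. -/
lemma no_three_aux (K : SimpleGraph V)
    (hdeg2 : ∀ v a b c : V, K.Adj v a → K.Adj v b → K.Adj v c → a = b ∨ b = c ∨ a = c)
    {y z : V} (hyz : y ≠ z)
    (hy : ∀ u u' : V, K.Adj y u → K.Adj y u' → u = u')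
    (hz : ∀ u u' : V, K.Adj z u → K.Adj z u' → u = u') :
    ∀ (n : ℕ) (u x₀ : V) (p : K.Walk u y) (q : K.Walk u z), p.IsPath → q.IsPath →
      K.Adj x₀ u → x₀ ∉ p.support → x₀ ∉ q.support → p.length ≤ n → False := by
  intro n
  induction n with
  | zero =>
    intro u x₀ p q hp hq hadj hxp hxq hlen
    have h0 : p.length = 0 := Nat.le_zero.mp hlen
    have huy : u = y := by
      cases p with
      | nil => rfl
      | cons h p' => simp at h0
    subst huy
    cases q with
    | nil => exact hyz rfl
    | cons hq1 q' =>
      rename_i v₁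
      have hx₀v₁ : x₀ = v₁ := hy x₀ v₁ hadj.symm hq1
      apply hxq
      rw [SimpleGraph.Walk.support_cons, hx₀v₁]
      exact List.mem_cons_of_mem _ q'.start_mem_support
  | succ n ih =>
    intro u x₀ p q hp hq hadj hxp hxq hlen
    cases p with
    | nil =>
      -- u = y : same argument as base case
      cases q with
      | nil => exact hyz rfl
      | cons hq1 q' =>
        rename_i v₁
        have hx₀v₁ : x₀ = v₁ := hy x₀ v₁ hadj.symm hq1
        apply hxq
        rw [SimpleGraph.Walk.support_cons, hx₀v₁]
        exact List.mem_cons_of_mem _ q'.start_mem_support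
    | cons hp1 p' =>
      rename_i u₁
      cases q with
      | nil =>
        -- u = z
        have hx₀u₁ : x₀ = u₁ := hz x₀ u₁ hadj.symm hp1
        apply hxp
        rw [SimpleGraph.Walk.support_cons, hx₀u₁]
        exact List.mem_cons_of_mem _ p'.start_mem_support
      | cons hq1 q' =>
        rename_i v₁
        obtain ⟨hp', hup'⟩ := (SimpleGraph.Walk.cons_isPath_iff hp1 p').mp hp
        obtain ⟨hq', huq'⟩ := (SimpleGraph.Walk.cons_isPath_iff hq1 q').mp hq
        have hx₀u₁ : x₀ ≠ u₁ := by
          rintro rfl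
          apply hxp
          rw [SimpleGraph.Walk.support_cons]
          exact List.mem_cons_of_mem _ p'.start_mem_support
        have hx₀v₁ : x₀ ≠ v₁ := by
          rintro rfl
          apply hxq
          rw [SimpleGraph.Walk.support_cons]
          exact List.mem_cons_of_mem _ q'.start_mem_support
        have hu₁v₁ : u₁ = v₁ := by
          rcases hdeg2 u x₀ u₁ v₁ hadj.symm hp1 hq1 with h | h | h
          · exact absurd h hx₀u₁
          · exact h
          · exact absurd h hx₀v₁
        subst hu₁v₁
        exact ih u₁ u p' q' hp' hq' hp1 hup' huq' (by simpa using hlen)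

lemma no_three (K : SimpleGraph V)
    (hdeg2 : ∀ v a b c : V, K.Adj v a → K.Adj v b → K.Adj v c → a = b ∨ b = c ∨ a = c)
    {x y z : V} (hxy : x ≠ y) (hxz : x ≠ z) (hyz : y ≠ z)
    (hx : ∀ u u' : V, K.Adj x u → K.Adj x u' → u = u')
    (hy : ∀ u u' : V, K.Adj y u → K.Adj y u' → u = u')
    (hz : ∀ u u' : V, K.Adj z u → K.Adj z u' → u = u')
    (hr1 : K.Reachable x y) (hr2 : K.Reachable x z) : False := by
  classical
  obtain ⟨p⟩ := hr1
  obtain ⟨q⟩ := hr2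
  have hp : p.bypass.IsPath := p.bypass_isPath
  have hq : q.bypass.IsPath := q.bypass_isPath
  set p' := p.bypass with hp'def
  set q' := q.bypass with hq'def
  clear_value p' q'
  cases p' with
  | nil => exact hxy rfl
  | cons hp1 p'' =>
    rename_i u₁
    cases q' with
    | nil => exact hxz rfl
    | cons hq1 q'' =>
      rename_i v₁
      obtain ⟨hp'', hxp''⟩ := (SimpleGraph.Walk.cons_isPath_iff hp1 p'').mp hp
      obtain ⟨hq'', hxq''⟩ := (SimpleGraph.Walk.cons_isPath_iff hq1 q'').mp hq
      have h1 : u₁ = v₁ := hx u₁ v₁ hp1 hq1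
      subst h1
      exact no_three_aux K hdeg2 hyz hy hz p''.length u₁ x p'' q'' hp'' hq'' hp1 hxp'' hxq''
        le_rfl


section Extension

variable {t D : ℕ} {w : V → V → ℕ}

lemma matching_pair_eq {S : Finset (Sym2 V)} (hS : IsMatching w S) {v p q : V}
    (hp : s(v, p) ∈ S) (hq : s(v, q) ∈ S) (hvq : v ≠ q) : p = q := by
  have h := hS.unique_at hp hq (Sym2.mem_mk_left v p) (Sym2.mem_mk_left v q)
  rcases Sym2.eq_iff.mp h with ⟨-, h2⟩ | ⟨h1, h2⟩
  · exact h2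
  · exact h2.trans h1

lemma finish_insert {M : Fin t → Finset (Sym2 V)}
    (hM : ∀ j, IsMatching w (M j)) {a b : V} (hab : a ≠ b)
    (hcount : ∀ u v, cnt M (s(u, v)) + (if s(u, v) = s(a, b) then 1 else 0) = w u v)
    (c : Fin t) (hca : ¬ Saturates (M c) a) (hcb : ¬ Saturates (M c) b) :
    ∃ M' : Fin t → Finset (Sym2 V), (∀ j, IsMatching w (M' j)) ∧
      ∀ u v, cnt M' (s(u, v)) = w u v := by
  classical
  have hwab : 1 ≤ w a b := by
    have h := hcount a b
    rw [if_pos rfl] at h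
    omega
  have hwba : 1 ≤ w b a := by
    have h := hcount b a
    rw [if_pos Sym2.eq_swap] at h
    omega
  refine ⟨Function.update M c (insert s(a, b) (M c)), ?_, ?_⟩
  · intro j
    by_cases hj : j = c
    · subst hj
      rw [Function.update_self]
      exact (hM j).insert hab hca hcb hwab hwba
    · rw [Function.update_of_ne hj]
      exact hM j
  · intro u v
    have hcu := cnt_update M c (insert s(a, b) (M c)) (s(u, v))
    by_cases he : s(u, v) = s(a, b)
    · have hnm : s(u, v) ∉ M c := by
        rw [he]
        exact fun hmem => hca ⟨_, hmem, Sym2.mem_mk_left a b⟩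
      have hmm : s(u, v) ∈ insert s(a, b) (M c) := by
        rw [he]; exact Finset.mem_insert_self _ _
      have hc := hcount u v
      rw [if_pos he] at hc
      rw [if_pos hmm, if_neg hnm] at hcu
      omega
    · have hmm : (s(u, v) ∈ insert s(a, b) (M c)) ↔ s(u, v) ∈ M c := by
        rw [Finset.mem_insert]
        exact or_iff_right he
      have hc := hcount u v
      rw [if_neg he] at hc
      rw [if_congr hmm rfl rfl] at hcu
      omega

lemma extend_coloring (hdegD : ∀ v, deg w v ≤ D) (ht : 3 * D ≤ 2 * t + 1)
    {x y : V} (hxy : x ≠ y) (M : Fin t → Finset (Sym2 V))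
    (hM : ∀ j, IsMatching w (M j))
    (hcount : ∀ u v, cnt M (s(u, v)) + (if s(u, v) = s(x, y) then 1 else 0) = w u v) :
    ∃ M' : Fin t → Finset (Sym2 V), (∀ j, IsMatching w (M' j)) ∧
      ∀ u v, cnt M' (s(u, v)) = w u v := by
  classical
  -- basic degree facts
  have hwxy : 1 ≤ w x y := by
    have h := hcount x y
    rw [if_pos rfl] at h
    omega
  have hwyx : 1 ≤ w y x := by
    have h := hcount y x
    rw [if_pos Sym2.eq_swap] at h
    omega
  have hD1 : 1 ≤ D := by
    have h1 : w x y ≤ deg w x :=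
      Finset.single_le_sum (f := fun u => w x u) (fun _ _ => Nat.zero_le _) (Finset.mem_univ y)
    have := hdegD x
    omega
  -- Step 0
  by_cases h0 : ∃ c, ¬ Saturates (M c) x ∧ ¬ Saturates (M c) y
  · obtain ⟨c, hcx, hcy⟩ := h0
    exact finish_insert hM hxy hcount c hcx hcy
  have h0' : ∀ c, Saturates (M c) x ∨ Saturates (M c) y := by
    intro c
    by_contra hc
    push_neg at hc
    exact h0 ⟨c, hc.1, hc.2⟩
  -- Step B : pick β missing at y
  have hmissy : (Finset.univ.filter fun j => ¬ Saturates (M j) y).Nonempty := by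
    rw [← Finset.card_pos]
    have h1 := satCard_bound hxy hcount y
    have h2 := missCard_eq M y
    have h3 := hdegD y
    rw [if_pos (Or.inr rfl)] at h1
    omega
  obtain ⟨β, hβ⟩ := hmissy
  have hβy : ¬ Saturates (M β) y := (Finset.mem_filter.mp hβ).2
  have hβx : Saturates (M β) x := (h0' β).resolve_right hβy
  obtain ⟨e₂, he₂M, hxe₂⟩ := hβx
  obtain ⟨z, rfl⟩ := Sym2.mem_iff_exists.mp hxe₂
  have hxz : x ≠ z := by
    intro h
    exact (hM β).1 _ he₂M (by rw [Sym2.mk_isDiag_iff]; exact h)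
  have hzy : z ≠ y := by
    rintro rfl
    exact hβy ⟨s(x, z), he₂M, Sym2.mem_mk_right x z⟩
  have hexey : s(x, y) ≠ s(x, z) := by
    intro h
    rcases Sym2.eq_iff.mp h with ⟨-, h2⟩ | ⟨h1, -⟩
    · exact hzy h2.symm
    · exact hxz h1
  -- the shifted coloring N, with uncolored edge (x,z)
  set N := Function.update M β (insert s(x, y) ((M β).erase (s(x, z)))) with hNdef
  have hNβ : N β = insert s(x, y) ((M β).erase (s(x, z))) := Function.update_self _ _ _
  have hNj : ∀ j, j ≠ β → N j = M j := fun j hj => Function.update_of_ne hj _ _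
  have hNmatch : ∀ j, IsMatching w (N j) := by
    intro j
    by_cases hj : j = β
    · subst hj
      rw [hNβ]
      refine ((hM j).subset (Finset.erase_subset _ _)).insert hxy ?_ ?_ hwxy hwyx
      · exact not_sat_erase (hM j) he₂M (Sym2.mem_mk_left x z)
      · rintro ⟨f, hf, hyf⟩
        exact hβy ⟨f, Finset.mem_of_mem_erase hf, hyf⟩
    · rw [hNj j hj]
      exact hM j
  have hcountN : ∀ u v, cnt N (s(u, v)) + (if s(u, v) = s(x, z) then 1 else 0) = w u v := by
    intro u v
    have hcu := cnt_update M β (insert s(x, y) ((M β).erase (s(x, z)))) (s(u, v))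
    rw [← hNdef] at hcu
    by_cases h1 : s(u, v) = s(x, y)
    · have hnm : s(u, v) ∉ M β := by
        rw [h1]
        exact fun hm => hβy ⟨_, hm, Sym2.mem_mk_right x y⟩
      have hmm : s(u, v) ∈ insert s(x, y) ((M β).erase (s(x, z))) := by
        rw [h1]; exact Finset.mem_insert_self _ _
      have hne2 : s(u, v) ≠ s(x, z) := by rw [h1]; exact hexey
      have hc := hcount u v
      rw [if_pos h1] at hc
      rw [if_pos hmm, if_neg hnm] at hcu
      rw [if_neg hne2]
      omega
    · by_cases h2 : s(u, v) = s(x, z)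
      · have hnm : s(u, v) ∈ M β := by rw [h2]; exact he₂M
        have hmm : s(u, v) ∉ insert s(x, y) ((M β).erase (s(x, z))) := by
          rw [h2, Finset.mem_insert]
          rintro (h | h)
          · exact hexey h.symm
          · exact Finset.notMem_erase _ _ h
        have hc := hcount u v
        rw [if_neg h1] at hc
        rw [if_pos hnm, if_neg hmm] at hcu
        rw [if_pos h2]
        omega
      · have hmm : (s(u, v) ∈ insert s(x, y) ((M β).erase (s(x, z))))
            ↔ s(u, v) ∈ M β := by
          rw [Finset.mem_insert, Finset.mem_erase]
          constructor
          · rintro (h | h)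
            · exact absurd h h1
            · exact h.2
          · intro h
            exact Or.inr ⟨h2, h⟩
        have hc := hcount u v
        rw [if_neg h1] at hc
        rw [if_congr hmm rfl rfl] at hcu
        rw [if_neg h2]
        omega
  -- saturation facts for N
  have hsxy_mem : s(x, y) ∈ N β := by rw [hNβ]; exact Finset.mem_insert_self _ _
  have hsatNβx : Saturates (N β) x := ⟨s(x, y), hsxy_mem, Sym2.mem_mk_left x y⟩
  have hsatNβy : Saturates (N β) y := ⟨s(x, y), hsxy_mem, Sym2.mem_mk_right x y⟩
  have hnsatNβz : ¬ Saturates (N β) z := by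
    rintro ⟨f, hf, hzf⟩
    rw [hNβ, Finset.mem_insert] at hf
    rcases hf with rfl | hf
    · rcases Sym2.mem_iff.mp hzf with rfl | rfl
      · exact hxz rfl
      · exact hzy rfl
    · exact not_sat_erase (hM β) he₂M (Sym2.mem_mk_right x z) ⟨f, hf, hzf⟩
  have h0N : ∀ c, Saturates (N c) x ∨ Saturates (N c) y := by
    intro c
    by_cases hc : c = β
    · subst hc; exact Or.inl hsatNβx
    · rw [hNj c hc]; exact h0' c
  -- Step C
  by_cases h1 : ∃ c, ¬ Saturates (N c) x ∧ ¬ Saturates (N c) z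
  · obtain ⟨c, hcx, hcz⟩ := h1
    exact finish_insert hNmatch hxz hcountN c hcx hcz
  have h1' : ∀ c, Saturates (N c) x ∨ Saturates (N c) z := by
    intro c
    by_contra hc
    push_neg at hc
    exact h1 ⟨c, hc.1, hc.2⟩
  -- Step D : find γ and α
  have hBC : ((Finset.univ.filter fun j => ¬ Saturates (N j) y)
      ∩ (Finset.univ.filter fun j => ¬ Saturates (N j) z)).Nonempty := by
    by_contra hBCc
    rw [Finset.not_nonempty_iff_eq_empty] at hBCc
    have hd1 : Disjoint (Finset.univ.filter fun j => ¬ Saturates (N j) x)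
        (Finset.univ.filter fun j => ¬ Saturates (N j) y) := by
      rw [Finset.disjoint_left]
      intro c hc1 hc2
      rcases h0N c with h | h
      · exact (Finset.mem_filter.mp hc1).2 h
      · exact (Finset.mem_filter.mp hc2).2 h
    have hd2 : Disjoint ((Finset.univ.filter fun j => ¬ Saturates (N j) x)
        ∪ (Finset.univ.filter fun j => ¬ Saturates (N j) y))
        (Finset.univ.filter fun j => ¬ Saturates (N j) z) := by
      rw [Finset.disjoint_left]
      intro c hc1 hc2
      rcases Finset.mem_union.mp hc1 with h | h
      · rcases h1' c with h' | h'
        · exact (Finset.mem_filter.mp h).2 h'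
        · exact (Finset.mem_filter.mp hc2).2 h'
      · have : c ∈ (Finset.univ.filter fun j => ¬ Saturates (N j) y)
            ∩ (Finset.univ.filter fun j => ¬ Saturates (N j) z) :=
          Finset.mem_inter.mpr ⟨h, hc2⟩
        rw [hBCc] at this
        exact absurd this (Finset.notMem_empty c)
    have hcard : ((Finset.univ.filter fun j => ¬ Saturates (N j) x)
        ∪ (Finset.univ.filter fun j => ¬ Saturates (N j) y)
        ∪ (Finset.univ.filter fun j => ¬ Saturates (N j) z)).card ≤ t := by
      calc _ ≤ (Finset.univ : Finset (Fin t)).card := Finset.card_le_univ _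
        _ = t := by simp
    rw [Finset.card_union_of_disjoint hd2, Finset.card_union_of_disjoint hd1] at hcard
    have hsx := satCard_bound hxz hcountN x
    rw [if_pos (Or.inl rfl)] at hsx
    have hsy := satCard_bound hxz hcountN y
    rw [if_neg (by push_neg; exact ⟨hxy.symm, hzy.symm⟩)] at hsy
    have hsz := satCard_bound hxz hcountN z
    rw [if_pos (Or.inr rfl)] at hsz
    have hmx := missCard_eq N x
    have hmy := missCard_eq N y
    have hmz := missCard_eq N z
    have hdx := hdegD x
    have hdy := hdegD y
    have hdz := hdegD z
    omega
  obtain ⟨γ, hγ⟩ := hBC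
  have hγy : ¬ Saturates (N γ) y := (Finset.mem_filter.mp (Finset.mem_inter.mp hγ).1).2
  have hγz : ¬ Saturates (N γ) z := (Finset.mem_filter.mp (Finset.mem_inter.mp hγ).2).2
  have hAne : (Finset.univ.filter fun j => ¬ Saturates (N j) x).Nonempty := by
    rw [← Finset.card_pos]
    have hsx := satCard_bound hxz hcountN x
    rw [if_pos (Or.inl rfl)] at hsx
    have hmx := missCard_eq N x
    have hdx := hdegD x
    omega
  obtain ⟨α, hα⟩ := hAne
  have hαx : ¬ Saturates (N α) x := (Finset.mem_filter.mp hα).2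
  have hαy : Saturates (N α) y := (h0N α).resolve_left hαx
  have hαz : Saturates (N α) z := (h1' α).resolve_left hαx
  have hγx : Saturates (N γ) x := (h0N γ).resolve_right hγy
  have hαγ : α ≠ γ := fun h => hγy (h ▸ hαy)
  have hαβ : α ≠ β := fun h => hαx (h ▸ hsatNβx)
  have hγβ : γ ≠ β := fun h => hγy (h ▸ hsatNβy)
  -- saturation-membership helpers
  have hmemα : ∀ {p q : V}, s(p, q) ∈ N α → Saturates (N α) p :=
    fun h => ⟨_, h, Sym2.mem_mk_left _ _⟩
  have hmemγ : ∀ {p q : V}, s(p, q) ∈ N γ → Saturates (N γ) p :=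
    fun h => ⟨_, h, Sym2.mem_mk_left _ _⟩
  by_cases hr1 : (KG (N α) (N γ)).Reachable x z
  · by_cases hr2 : (KG (N α) (N γ)).Reachable x y
    · -- case (c): impossible, three leaves in one chain
      exfalso
      have hdeg2 : ∀ v a b c : V, (KG (N α) (N γ)).Adj v a → (KG (N α) (N γ)).Adj v b →
          (KG (N α) (N γ)).Adj v c → a = b ∨ b = c ∨ a = c := by
        intro v a b c ⟨hva, ha⟩ ⟨hvb, hb⟩ ⟨hvc, hc⟩
        rcases ha with ha | ha <;> rcases hb with hb | hb
        · exact Or.inl (matching_pair_eq (hNmatch α) ha hb hvb)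
        · rcases hc with hc | hc
          · exact Or.inr (Or.inr (matching_pair_eq (hNmatch α) ha hc hvc))
          · exact Or.inr (Or.inl (matching_pair_eq (hNmatch γ) hb hc hvc))
        · rcases hc with hc | hc
          · exact Or.inr (Or.inl (matching_pair_eq (hNmatch α) hb hc hvc))
          · exact Or.inr (Or.inr (matching_pair_eq (hNmatch γ) ha hc hvc))
        · exact Or.inl (matching_pair_eq (hNmatch γ) ha hb hvb)
      have hleafx : ∀ u u' : V, (KG (N α) (N γ)).Adj x u → (KG (N α) (N γ)).Adj x u' →
          u = u' := by
        intro u u' ⟨hxu, hu⟩ ⟨hxu', hu'⟩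
        rcases hu with hu | hu
        · exact absurd (hmemα hu) hαx
        · rcases hu' with hu' | hu'
          · exact absurd (hmemα hu') hαx
          · exact matching_pair_eq (hNmatch γ) hu hu' hxu'
      have hleafy : ∀ u u' : V, (KG (N α) (N γ)).Adj y u → (KG (N α) (N γ)).Adj y u' →
          u = u' := by
        intro u u' ⟨hyu, hu⟩ ⟨hyu', hu'⟩
        rcases hu with hu | hu
        · rcases hu' with hu' | hu'
          · exact matching_pair_eq (hNmatch α) hu hu' hyu'
          · exact absurd (hmemγ hu') hγy
        · exact absurd (hmemγ hu) hγy
      have hleafz : ∀ u u' : V, (KG (N α) (N γ)).Adj z u → (KG (N α) (N γ)).Adj z u' →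
          u = u' := by
        intro u u' ⟨hzu, hu⟩ ⟨hzu', hu'⟩
        rcases hu with hu | hu
        · rcases hu' with hu' | hu'
          · exact matching_pair_eq (hNmatch α) hu hu' hzu'
          · exact absurd (hmemγ hu') hγz
        · exact absurd (hmemγ hu) hγz
      exact no_three (KG (N α) (N γ)) hdeg2 hxy hxz hzy.symm hleafx hleafy hleafz hr2 hr1
    · -- case (b): swap the chain of y, recolor e₁ with α, put (x,z) in β
      set Sα := SwA (N α) (N γ) y with hSαdef
      set Sγ := SwA (N γ) (N α) y with hSγdef
      set N' := Function.update (Function.update N α Sα) γ Sγ with hN'def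
      have hN'α : N' α = Sα := by
        rw [hN'def, Function.update_of_ne hαγ, Function.update_self]
      have hN'γ : N' γ = Sγ := Function.update_self _ _ _
      have hN'j : ∀ j, j ≠ α → j ≠ γ → N' j = N j := by
        intro j hjα hjγ
        rw [hN'def, Function.update_of_ne hjγ, Function.update_of_ne hjα]
      have hN'match : ∀ j, IsMatching w (N' j) := by
        intro j
        by_cases hjα : j = α
        · subst hjα; rw [hN'α]; exact swap_isMatching w (hNmatch j) (hNmatch γ)
        · by_cases hjγ : j = γ
          · subst hjγ; rw [hN'γ]; exact swap_isMatching w (hNmatch j) (hNmatch α)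
          · rw [hN'j j hjα hjγ]; exact hNmatch j
      have hcntN' : ∀ e : Sym2 V, cnt N' e = cnt N e := by
        intro e
        have c1 := cnt_update N α Sα e
        have c2 := cnt_update (Function.update N α Sα) γ Sγ e
        rw [Function.update_of_ne hαγ.symm, ← hN'def] at c2
        have c3 := swap_indicator (A := N α) (B := N γ) (p₀ := y) e
        rw [← hSαdef, ← hSγdef] at c3
        omega
      have hcountN' : ∀ u v, cnt N' (s(u, v)) + (if s(u, v) = s(x, z) then 1 else 0)
          = w u v := by
        intro u v
        rw [hcntN']
        exact hcountN u v
      -- y now misses α; x still misses α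
      have hnry : ¬ (KG (N α) (N γ)).Reachable y x := fun h => hr2 h.symm
      have hy'α : ¬ Saturates (N' α) y := by
        rw [hN'α, hSαdef, swap_sat_reach (SimpleGraph.Reachable.refl y)]
        exact hγy
      have hx'α : ¬ Saturates (N' α) x := by
        rw [hN'α, hSαdef, swap_sat_not_reach hnry]
        exact hαx
      have hN'β : N' β = N β := hN'j β hαβ.symm hγβ.symm
      -- move e₁ = s(x,y) from class β to class α
      set T1 := Function.update N' α (insert s(x, y) (N' α)) with hT1def
      have hT1α : T1 α = insert s(x, y) (N' α) := Function.update_self _ _ _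
      have hT1β : T1 β = N β := by
        rw [hT1def, Function.update_of_ne hαβ.symm, hN'β]
      have hT1j : ∀ j, j ≠ α → T1 j = N' j := fun j hj => Function.update_of_ne hj _ _
      set T2 := Function.update T1 β ((T1 β).erase (s(x, y))) with hT2def
      have hT2β : T2 β = (N β).erase (s(x, y)) := by
        rw [hT2def, Function.update_self, hT1β]
      have hT2j : ∀ j, j ≠ β → T2 j = T1 j := fun j hj => Function.update_of_ne hj _ _
      have hT2match : ∀ j, IsMatching w (T2 j) := by
        intro j
        by_cases hjβ : j = β
        · subst hjβ
          rw [hT2β]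
          exact (hNmatch j).subset (Finset.erase_subset _ _)
        · rw [hT2j j hjβ]
          by_cases hjα : j = α
          · subst hjα
            rw [hT1α]
            exact (hN'match j).insert hxy hx'α hy'α hwxy hwyx
          · rw [hT1j j hjα]
            exact hN'match j
      have hsxyN'α : s(x, y) ∉ N' α := fun h => hx'α ⟨_, h, Sym2.mem_mk_left x y⟩
      have hcntT2 : ∀ e : Sym2 V, cnt T2 e = cnt N e := by
        intro e
        have c1 := cnt_update N' α (insert s(x, y) (N' α)) e
        rw [← hT1def] at c1
        have c2 := cnt_update T1 β ((T1 β).erase (s(x, y))) e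
        rw [← hT2def] at c2
        rw [hT1β] at c2
        have c4 := hcntN' e
        by_cases he : e = s(x, y)
        · subst he
          rw [if_neg hsxyN'α, if_pos (Finset.mem_insert_self _ _)] at c1
          rw [if_pos hsxy_mem, if_neg (Finset.notMem_erase _ _)] at c2
          omega
        · have hi1 : (e ∈ insert s(x, y) (N' α)) ↔ e ∈ N' α := by
            rw [Finset.mem_insert]; exact or_iff_right he
          have hi2 : (e ∈ (N β).erase (s(x, y))) ↔ e ∈ N β := by
            rw [Finset.mem_erase]
            exact and_iff_right he
          rw [if_congr hi1 rfl rfl] at c1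
          rw [if_congr hi2 rfl rfl] at c2
          omega
      have hcountT2 : ∀ u v, cnt T2 (s(u, v)) + (if s(u, v) = s(x, z) then 1 else 0)
          = w u v := by
        intro u v
        rw [hcntT2]
        exact hcountN u v
      have hT2βx : ¬ Saturates (T2 β) x := by
        rw [hT2β]
        rintro ⟨f, hf, hxf⟩
        obtain ⟨hfne, hfN⟩ := Finset.mem_erase.mp hf
        exact hfne ((hNmatch β).unique_at hfN hsxy_mem hxf (Sym2.mem_mk_left x y))
      have hT2βz : ¬ Saturates (T2 β) z := by
        rw [hT2β]
        rintro ⟨f, hf, hzf⟩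
        exact hnsatNβz ⟨f, Finset.mem_of_mem_erase hf, hzf⟩
      exact finish_insert hT2match hxz hcountT2 β hT2βx hT2βz
  · -- case (a): swap the chain of z, then color (x,z) with α
    set Sα := SwA (N α) (N γ) z with hSαdef
    set Sγ := SwA (N γ) (N α) z with hSγdef
    set N' := Function.update (Function.update N α Sα) γ Sγ with hN'def
    have hN'α : N' α = Sα := by
      rw [hN'def, Function.update_of_ne hαγ, Function.update_self]
    have hN'γ : N' γ = Sγ := Function.update_self _ _ _
    have hN'j : ∀ j, j ≠ α → j ≠ γ → N' j = N j := by
      intro j hjα hjγ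
      rw [hN'def, Function.update_of_ne hjγ, Function.update_of_ne hjα]
    have hN'match : ∀ j, IsMatching w (N' j) := by
      intro j
      by_cases hjα : j = α
      · subst hjα; rw [hN'α]; exact swap_isMatching w (hNmatch j) (hNmatch γ)
      · by_cases hjγ : j = γ
        · subst hjγ; rw [hN'γ]; exact swap_isMatching w (hNmatch j) (hNmatch α)
        · rw [hN'j j hjα hjγ]; exact hNmatch j
    have hcntN' : ∀ e : Sym2 V, cnt N' e = cnt N e := by
      intro e
      have c1 := cnt_update N α Sα e
      have c2 := cnt_update (Function.update N α Sα) γ Sγ e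
      rw [Function.update_of_ne hαγ.symm, ← hN'def] at c2
      have c3 := swap_indicator (A := N α) (B := N γ) (p₀ := z) e
      rw [← hSαdef, ← hSγdef] at c3
      omega
    have hcountN' : ∀ u v, cnt N' (s(u, v)) + (if s(u, v) = s(x, z) then 1 else 0)
        = w u v := by
      intro u v
      rw [hcntN']
      exact hcountN u v
    have hnrz : ¬ (KG (N α) (N γ)).Reachable z x := fun h => hr1 h.symm
    have hz'α : ¬ Saturates (N' α) z := by
      rw [hN'α, hSαdef, swap_sat_reach (SimpleGraph.Reachable.refl z)]
      exact hγz
    have hx'α : ¬ Saturates (N' α) x := by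
      rw [hN'α, hSαdef, swap_sat_not_reach hnrz]
      exact hαx
    exact finish_insert hN'match hxz hcountN' α hx'α hz'α

end Extension

section Wrapper

lemma evac_all (D : ℕ) :
    ∀ (n : ℕ) (w : V → V → ℕ), (∀ u v, w u v = w v u) → (∀ v, w v v = 0) →
      (∀ v, deg w v ≤ D) → (∑ u, ∑ v, w u v) = n →
      ∃ M : Fin (3 * D / 2) → Finset (Sym2 V),
        (∀ j, IsMatching w (M j)) ∧ ∀ u v, cnt M (s(u, v)) = w u v := by
  intro n
  induction n using Nat.strong_induction_on with
  | _ n ih =>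
    intro w hsymm hloop hdeg hsum
    by_cases hw : ∀ u v, w u v = 0
    · refine ⟨fun _ => ∅, fun j => ⟨by simp, ?_, by simp⟩, fun u v => ?_⟩
      · intro u v h
        simp at h
      · simp [cnt, hw]
    · push_neg at hw
      obtain ⟨x, y, hxy0⟩ := hw
      have hxy : x ≠ y := by
        rintro rfl
        exact hxy0 (hloop x)
      set w' : V → V → ℕ := fun u v => if s(u, v) = s(x, y) then w u v - 1 else w u v
        with hw'def
      have hw'le : ∀ u v, w' u v ≤ w u v := by
        intro u v
        rw [hw'def]
        dsimp only
        split <;> omega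
      have hw'symm : ∀ u v, w' u v = w' v u := by
        intro u v
        rw [hw'def]
        dsimp only
        rw [show s(u, v) = s(v, u) from Sym2.eq_swap, hsymm u v]
      have hw'loop : ∀ v, w' v v = 0 := by
        intro v
        rw [hw'def]
        dsimp only
        split <;> simp [hloop v]
      have hw'deg : ∀ v, deg w' v ≤ D := fun v =>
        le_trans (Finset.sum_le_sum fun u _ => hw'le v u) (hdeg v)
      have hrecover : ∀ u v, w' u v + (if s(u, v) = s(x, y) then 1 else 0) = w u v := by
        intro u v
        rw [hw'def]
        dsimp only
        by_cases h : s(u, v) = s(x, y)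
        · rw [if_pos h, if_pos h]
          have h1 : 1 ≤ w u v := by
            rcases Sym2.eq_iff.mp h with ⟨rfl, rfl⟩ | ⟨rfl, rfl⟩
            · omega
            · rw [hsymm]
              omega
          omega
        · rw [if_neg h, if_neg h]
          omega
      have hsum' : (∑ u, ∑ v, w' u v) + 2 = n := by
      -- each of the two ordered pairs (x,y),(y,x) contributes 1
        have e2 : ∀ u, (∑ v, (if s(u, v) = s(x, y) then (1:ℕ) else 0))
            = if u = x ∨ u = y then 1 else 0 := fun u => sum_ind_pair hxy u
        have e4 : (∑ u, ∑ v, w' u v) + (∑ u, if u = x ∨ u = y then (1:ℕ) else 0)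
            = ∑ u, ∑ v, w u v := by
          rw [← Finset.sum_add_distrib]
          refine Finset.sum_congr rfl fun u _ => ?_
          rw [← e2 u, ← Finset.sum_add_distrib]
          exact Finset.sum_congr rfl fun v _ => hrecover u v
        have e5 : ∀ u, (if u = x ∨ u = y then (1:ℕ) else 0)
            = (if u = x then 1 else 0) + (if u = y then 1 else 0) := by
          intro u
          by_cases h1 : u = x <;> by_cases h2 : u = y
          · exact absurd (h1.symm.trans h2) hxy
          · simp [h1, h2, hxy]
          · simp [h1, h2, (Ne.symm hxy : y ≠ x)]
          · simp [h1, h2]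
        have e3 : (∑ u, if u = x ∨ u = y then (1:ℕ) else 0) = 2 := by
          rw [Finset.sum_congr rfl fun u _ => e5 u, Finset.sum_add_distrib]
          simp
        rw [e3] at e4
        omega
      obtain ⟨M0, hM0match, hM0cnt⟩ := ih (∑ u, ∑ v, w' u v) (by omega) w'
        hw'symm hw'loop hw'deg rfl
      have hMmatch : ∀ j, IsMatching w (M0 j) := fun j => (hM0match j).mono hw'le
      have hcount : ∀ u v, cnt M0 (s(u, v)) + (if s(u, v) = s(x, y) then 1 else 0)
          = w u v := by
        intro u v
        rw [hM0cnt u v]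
        exact hrecover u v
      have ht : 3 * D ≤ 2 * (3 * D / 2) + 1 := by omega
      exact extend_coloring hdeg ht hxy M0 hMmatch hcount

end Wrapper

end ShannonProof

/-- The edge multiset of every loopless multigraph on `n ≥ 2` vertices with
maximum degree `Δ` can be partitioned into at most `⌊3Δ/2⌋` matchings. -/
theorem shannon_edge_coloring {V : Type} [Fintype V] [DecidableEq V]
    (w : V → V → ℕ) (hsymm : ∀ u v, w u v = w v u) (hloop : ∀ v, w v v = 0)
    (hn : 2 ≤ Fintype.card V) :
    ∃ T : ℕ, T ≤ 3 * maxDeg w / 2 ∧ CanEvacuate w T := by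
  classical
  refine ⟨3 * maxDeg w / 2, le_refl _, ?_⟩
  have hdeg : ∀ v, deg w v ≤ maxDeg w := fun v => Finset.le_sup (Finset.mem_univ v)
  obtain ⟨M, hmatch, hcnt⟩ := evac_all (maxDeg w) (∑ u, ∑ v, w u v) w hsymm hloop hdeg rfl
  exact ⟨M, hmatch, fun u v => hcnt u v⟩

end NSBPaper
end

section
/- Let G be a loopless multigraph with maximum degree Δ ≥ 1 whose support is bipartite. Then there exists a matching of G that saturates every vertex of maximum degree Δ. -/
open scoped Classical

namespace NSBPaper

variable {V : Type} [Fintype V] [DecidableEq V]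

/-- The doubled multigraph on `V ⊕ V`. -/
private def dbl (Δ : ℕ) (w : V → V → ℕ) : (V ⊕ V) → (V ⊕ V) → ℕ
  | .inl u, .inl v => w u v
  | .inr u, .inr v => w u v
  | .inl u, .inr v => if u = v then Δ - deg w u else 0
  | .inr u, .inl v => if u = v then Δ - deg w u else 0

private lemma dbl_symm (Δ : ℕ) (w : V → V → ℕ) (hsymm : ∀ u v, w u v = w v u) :
    ∀ x y, dbl Δ w x y = dbl Δ w y x := by
  rintro (u|u) (v|v) <;> simp only [dbl] <;> first
    | exact hsymm u v
    | (rcases eq_or_ne u v with rfl | h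
       · simp
       · simp [h, Ne.symm h])

private lemma dbl_reg (Δ : ℕ) (w : V → V → ℕ) (hle : ∀ v, deg w v ≤ Δ) :
    ∀ x, (∑ y, dbl Δ w x y) = Δ := by
  rintro (u|u) <;>
  · rw [Fintype.sum_sum_type]
    simp only [dbl, Finset.sum_ite_eq, Finset.mem_univ, if_true]
    first
      | rw [show (∑ v, w u v) = deg w u from rfl, Nat.add_sub_cancel' (hle u)]
      | rw [show (∑ v, w u v) = deg w u from rfl,
            Nat.sub_add_cancel (hle u)]

/-- If the support of `G` is bipartite, some matching saturates every
vertex of maximum degree `Δ ≥ 1`. -/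
theorem bipartite_maxdeg_saturating_matching {V : Type} [Fintype V] [DecidableEq V]
    (w : V → V → ℕ) (hsymm : ∀ u v, w u v = w v u) (hloop : ∀ v, w v v = 0)
    (hΔ : 1 ≤ maxDeg w)
    (hbip : BipartiteOn (support w) Set.univ) :
    ∃ M : Finset (Sym2 V), IsMatching w M ∧
      ∀ v : V, deg w v = maxDeg w → Saturates M v := by
  classical
  obtain ⟨A, hA⟩ := hbip
  set Δ := maxDeg w with hΔdef
  have hdegle : ∀ v, deg w v ≤ Δ := fun v =>
    Finset.le_sup (f := fun v => deg w v) (Finset.mem_univ v)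
  set w' := dbl Δ w with hw'def
  have hw'symm := dbl_symm Δ w hsymm
  have hreg := dbl_reg Δ w hdegle
  -- the left part
  set L : Finset (V ⊕ V) :=
    Finset.univ.filter (fun x => match x with | .inl a => a ∈ A | .inr b => b ∉ A) with hLdef
  have hmemL : ∀ a : V, ((Sum.inl a : V ⊕ V) ∈ L ↔ a ∈ A) ∧ ((Sum.inr a : V ⊕ V) ∈ L ↔ a ∉ A) := by
    intro a; constructor <;> simp [hLdef]
  -- every positive-multiplicity edge crosses from L to its complement
  have hcross : ∀ x y, x ∈ L → 1 ≤ w' x y → y ∉ L := by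
    rintro (u|u) (v|v) hx hw
    · have huv : u ≠ v := by
        rintro rfl
        simp only [hw'def, dbl, hloop u] at hw
        omega
      have hadj : (support w).Adj u v := (⟨huv, hw, by rwa [hsymm v u]⟩ : u ≠ v ∧ 1 ≤ w u v ∧ 1 ≤ w v u)
      have := hA (Set.mem_univ u) (Set.mem_univ v) hadj
      have hu : u ∈ A := (hmemL u).1.1 hx
      rw [(hmemL v).1]
      exact this.1 hu
    · simp only [hw'def, dbl] at hw
      rcases eq_or_ne u v with rfl | h
      · have hu : u ∈ A := (hmemL u).1.1 hx
        rw [(hmemL u).2]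
        exact fun h => h hu
      · simp [h] at hw
    · simp only [hw'def, dbl] at hw
      rcases eq_or_ne u v with rfl | h
      · have hu : u ∉ A := (hmemL u).2.1 hx
        rw [(hmemL u).1]
        exact hu
      · simp [h] at hw
    · have huv : u ≠ v := by
        rintro rfl
        simp only [hw'def, dbl, hloop u] at hw
        omega
      have hadj : (support w).Adj u v := by
        simp only [hw'def, dbl] at hw
        exact (⟨huv, hw, by rwa [hsymm v u]⟩ : u ≠ v ∧ 1 ≤ w u v ∧ 1 ≤ w v u)
      have := hA (Set.mem_univ u) (Set.mem_univ v) hadj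
      have hu : u ∉ A := (hmemL u).2.1 hx
      rw [(hmemL v).2]
      exact fun hv => hu (this.2 hv)
  -- |Lᶜ| = |L|
  have hswL : ∀ x : V ⊕ V, x.swap ∈ L ↔ x ∉ L := by
    rintro (u|u) <;> simp [hLdef]
  have himg : L.image Sum.swap = Lᶜ := by
    ext x
    simp only [Finset.mem_image, Finset.mem_compl]
    constructor
    · rintro ⟨y, hy, rfl⟩
      exact fun h => (hswL y).1 h hy
    · intro hx
      exact ⟨x.swap, (hswL x).2 hx, Sum.swap_swap x⟩
  have hcardc : Lᶜ.card = L.card := by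
    rw [← himg, Finset.card_image_of_injective _ (Function.LeftInverse.injective (g := Sum.swap) fun x => Sum.swap_swap x)]
  -- Hall's condition
  set t : ↥L → Finset (V ⊕ V) :=
    fun x => Finset.univ.filter (fun y => 1 ≤ w' ↑x y) with htdef
  have hall : ∀ s : Finset ↥L, s.card ≤ (s.biUnion t).card := by
    intro s
    set N := s.biUnion t with hN
    have key : Δ * s.card ≤ Δ * N.card := by
      have h1 : ∀ x ∈ s, (∑ y ∈ N, w' (↑x) y) = Δ := by
        intro x hx
        rw [← hreg (↑x : V ⊕ V)]
        apply Finset.sum_subset (Finset.subset_univ N)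
        intro y _ hy
        by_contra h
        exact hy (Finset.mem_biUnion.2 ⟨x, hx, Finset.mem_filter.2 ⟨Finset.mem_univ y, by omega⟩⟩)
      have h2 : ∀ y ∈ N, (∑ x ∈ s, w' (↑x) y) ≤ Δ := by
        intro y _
        calc (∑ x ∈ s, w' (↑x) y) = ∑ x ∈ s.image Subtype.val, w' x y := by
              rw [Finset.sum_image (fun a _ b _ h => Subtype.ext h)]
          _ ≤ ∑ x, w' x y := Finset.sum_le_sum_of_subset (Finset.subset_univ _)
          _ = ∑ x, w' y x := Finset.sum_congr rfl fun x _ => hw'symm x y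
          _ = Δ := hreg y
      calc Δ * s.card = ∑ x ∈ s, ∑ y ∈ N, w' (↑x) y := by
            rw [Finset.sum_congr rfl h1, Finset.sum_const, smul_eq_mul, mul_comm]
        _ = ∑ y ∈ N, ∑ x ∈ s, w' (↑x) y := Finset.sum_comm
        _ ≤ ∑ y ∈ N, Δ := Finset.sum_le_sum h2
        _ = Δ * N.card := by rw [Finset.sum_const, smul_eq_mul, mul_comm]
    exact Nat.le_of_mul_le_mul_left key hΔ
  obtain ⟨f, hfinj, hft⟩ := (Finset.all_card_le_biUnion_card_iff_exists_injective t).1 hall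
  have hfw : ∀ x : ↥L, 1 ≤ w' ↑x (f x) := fun x => (Finset.mem_filter.1 (hft x)).2
  have hfR : ∀ x : ↥L, f x ∉ L := fun x => hcross _ _ x.2 (hfw x)
  -- f is surjective onto Lᶜ
  have hsurj : ∀ y ∉ L, ∃ x : ↥L, f x = y := by
    have h1 : Finset.univ.image f ⊆ Lᶜ := by
      intro y hy
      obtain ⟨x, _, rfl⟩ := Finset.mem_image.1 hy
      exact Finset.mem_compl.2 (hfR x)
    have h2 : Lᶜ.card ≤ (Finset.univ.image f).card := by
      rw [Finset.card_image_of_injective _ hfinj, Finset.card_univ, Fintype.card_coe, hcardc]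
    have h3 := Finset.eq_of_subset_of_card_le h1 h2
    intro y hy
    have : y ∈ Finset.univ.image f := h3 ▸ Finset.mem_compl.2 hy
    obtain ⟨x, _, hx⟩ := Finset.mem_image.1 this
    exact ⟨x, hx⟩
  -- define the matching
  set M' : Finset (Sym2 (V ⊕ V)) := Finset.univ.image (fun x : ↥L => s(↑x, f x)) with hM'def
  set M : Finset (Sym2 V) := Finset.univ.filter (fun e => Sym2.map Sum.inl e ∈ M') with hMdef
  have hMmem : ∀ u v : V, s(u, v) ∈ M ↔
      ∃ x : ↥L, ((↑x : V ⊕ V) = Sum.inl u ∧ f x = Sum.inl v) ∨ ((↑x : V ⊕ V) = Sum.inl v ∧ f x = Sum.inl u) := by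
    intro u v
    simp only [hMdef, Finset.mem_filter, Finset.mem_univ, true_and, Sym2.map_pair_eq,
      hM'def, Finset.mem_image]
    constructor
    · rintro ⟨x, hx⟩
      rcases Sym2.eq_iff.1 hx with ⟨h1, h2⟩ | ⟨h1, h2⟩
      · exact ⟨x, Or.inl ⟨h1, h2⟩⟩
      · exact ⟨x, Or.inr ⟨h1, h2⟩⟩
    · rintro ⟨x, ⟨h1, h2⟩ | ⟨h1, h2⟩⟩
      · exact ⟨x, by rw [h1, h2]⟩
      · exact ⟨x, by rw [h1, h2, Sym2.eq_swap]⟩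
  have hMw : ∀ u v : V, s(u, v) ∈ M → 1 ≤ w u v := by
    intro u v huv
    obtain ⟨x, ⟨h1, h2⟩ | ⟨h1, h2⟩⟩ := (hMmem u v).1 huv
    · have := hfw x; rw [h1, h2] at this; simpa [hw'def, dbl] using this
    · have := hfw x; rw [h1, h2] at this
      simpa [hw'def, dbl, hsymm u v] using this
  refine ⟨M, ⟨?_, hMw, ?_⟩, ?_⟩
  · -- non-diagonal
    intro e he
    induction e with
    | _ u v =>
      intro hd
      rw [Sym2.isDiag_iff_proj_eq] at hd
      have huv : u = v := hd
      subst huv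
      have := hMw u u he
      rw [hloop u] at this
      omega
  · -- pairwise disjoint
    have hdisj : ∀ x₁ x₂ : ↥L, x₁ ≠ x₂ → ∀ z : V ⊕ V,
        (z = ↑x₁ ∨ z = f x₁) → ¬(z = ↑x₂ ∨ z = f x₂) := by
      rintro x₁ x₂ hne z (rfl | rfl) (h | h)
      · exact hne (Subtype.ext h)
      · exact hfR x₂ (h ▸ x₁.2)
      · exact hfR x₁ (h.symm ▸ x₂.2)
      · exact hne (hfinj h)
    intro e he g hg hne x hxe hxg
    induction e with
    | _ a b =>
      induction g with
      | _ c d =>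
        obtain ⟨x₁, hx₁⟩ := (hMmem a b).1 he
        obtain ⟨x₂, hx₂⟩ := (hMmem c d).1 hg
        have h12 : x₁ ≠ x₂ := by
          rintro rfl
          apply hne
          rcases hx₁ with ⟨h1, h2⟩ | ⟨h1, h2⟩ <;> rcases hx₂ with ⟨h3, h4⟩ | ⟨h3, h4⟩ <;>
            rw [Sum.inl.inj (h1.symm.trans h3), Sum.inl.inj (h2.symm.trans h4)] <;>
            first | rfl | exact Sym2.eq_swap
        have hz1 : (Sum.inl x : V ⊕ V) = ↑x₁ ∨ (Sum.inl x : V ⊕ V) = f x₁ := by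
          rcases Sym2.mem_iff.1 hxe with rfl | rfl
          · rcases hx₁ with ⟨h1, _⟩ | ⟨_, h2⟩
            · exact Or.inl h1.symm
            · exact Or.inr h2.symm
          · rcases hx₁ with ⟨_, h2⟩ | ⟨h1, _⟩
            · exact Or.inr h2.symm
            · exact Or.inl h1.symm
        have hz2 : (Sum.inl x : V ⊕ V) = ↑x₂ ∨ (Sum.inl x : V ⊕ V) = f x₂ := by
          rcases Sym2.mem_iff.1 hxg with rfl | rfl
          · rcases hx₂ with ⟨h1, _⟩ | ⟨_, h2⟩
            · exact Or.inl h1.symm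
            · exact Or.inr h2.symm
          · rcases hx₂ with ⟨_, h2⟩ | ⟨h1, _⟩
            · exact Or.inr h2.symm
            · exact Or.inl h1.symm
        exact hdisj x₁ x₂ h12 _ hz1 hz2
  · -- saturation
    intro m hm
    have hmz : Δ - deg w m = 0 := by rw [hm]; exact Nat.sub_self Δ
    by_cases hmL : (Sum.inl m : V ⊕ V) ∈ L
    · set x : ↥L := ⟨Sum.inl m, hmL⟩ with hxdef
      have h1 := hfw x
      match hy : f x with
      | Sum.inl v =>
        rw [hy] at h1
        refine ⟨s(m, v), (hMmem m v).2 ⟨x, Or.inl ⟨rfl, hy⟩⟩, Sym2.mem_mk_left m v⟩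
      | Sum.inr v =>
        rw [hy] at h1
        exfalso
        rcases eq_or_ne m v with rfl | h
        · simp [hw'def, dbl, hmz, hxdef] at h1
        · simp [hw'def, dbl, h, hxdef] at h1
    · obtain ⟨x, hx⟩ := hsurj (Sum.inl m) hmL
      have h1 := hfw x
      rw [hx] at h1
      match hy : (↑x : V ⊕ V), x.2 with
      | Sum.inl v, hv =>
        rw [hy] at h1
        refine ⟨s(v, m), (hMmem v m).2 ⟨x, Or.inl ⟨hy, hx⟩⟩, Sym2.mem_mk_right v m⟩
      | Sum.inr v, hv =>
        rw [hy] at h1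
        exfalso
        rcases eq_or_ne v m with rfl | h
        · simp [hw'def, dbl, hmz] at h1
        · simp [hw'def, dbl, h] at h1


end NSBPaper
end
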